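/- arXiv:1305.4361 — 5 statements merged into one kernel-verified Lean document; each statement's English description precedes it below -/
import Mathlib

section
/- Let (Ω,ℱ,ℙ) be a probability space and (ε_n)_{n ∈ ℕ, n squarefree} a mutually independent family of real random variables with ℙ(ε_n = 1) = ℙ(ε_n = −1) = 1/2 for each squarefree n; define μ_rand(n)(ω) = ε_n(ω) if n is squarefree and μ_rand(n)(ω) = 0 otherwise. Let X be a compact metric space and T : X → X a homeomorphism whose topological entropy is zero. Then there exists a measurable set Ω′ ⊆ Ω with ℙ(Ω′) = 1 such that for every ω ∈ Ω′, every x ∈ X and every continuous function f : X → ℂ, (1/N) ∑_{n=1}^{N} f(Tⁿx) μ_rand(n)(ω) → 0 as N → ∞. -/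
open scoped BigOperators
open MeasureTheory

/-- `coverNum T m ε` is the minimal cardinality of a finite set of points whose
`d_m`-balls of radius `ε` cover `X`, where `d_m(x,y) = max_{0 ≤ k ≤ m−1} d(T^k x, T^k y)`. -/
noncomputable def coverNum {X : Type*} [MetricSpace X] (T : X → X) (m : ℕ) (ε : ℝ) : ℕ :=
  sInf {r : ℕ | ∃ s : Finset X, s.card = r ∧
    ∀ x : X, ∃ y ∈ s, ∀ k < m, dist (T^[k] x) (T^[k] y) < ε}

/-- `(X,T)` has zero topological entropy: for every `η > 0` there are `ε₀ > 0` and `M₀` such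
that `r(m,ε) < e^{mη}` for all `0 < ε < ε₀` and all `m > M₀`. -/
def ZeroTopEntropy {X : Type*} [MetricSpace X] (T : X → X) : Prop :=
  ∀ η : ℝ, 0 < η → ∃ ε₀ : ℝ, 0 < ε₀ ∧ ∃ M₀ : ℕ,
    ∀ ε : ℝ, 0 < ε → ε < ε₀ → ∀ m : ℕ, M₀ < m →
      (coverNum T m ε : ℝ) < Real.exp (m * η)

/-- compatibility: `Complex.abs` as the norm -/
noncomputable def Complex.abs : AbsoluteValue ℂ ℝ := NormedField.toAbsoluteValue ℂ

lemma Complex.abs_apply' (z : ℂ) : Complex.abs z = ‖z‖ := rfl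

lemma Complex.norm_eq_abs (z : ℂ) : ‖z‖ = Complex.abs z := rfl

lemma Complex.continuous_abs : Continuous Complex.abs := continuous_norm

lemma Complex.abs_ofReal (r : ℝ) : Complex.abs (r : ℂ) = |r| := by
  rw [Complex.abs_apply', Complex.norm_real, Real.norm_eq_abs]

section Aux
open ProbabilityTheory
open scoped ENNReal

-- test instances
example {X : Type*} [MetricSpace X] [CompactSpace X] :
    TopologicalSpace.SeparableSpace C(X, ℂ) := inferInstance

-- pm distribution integral
lemma pm_integral {Ω : Type*} [MeasurableSpace Ω] (P : Measure Ω) [IsProbabilityMeasure P]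
    (g : Ω → ℝ) (hg : Measurable g)
    (h1 : P {ω | g ω = 1} = 1/2) (h2 : P {ω | g ω = -1} = 1/2)
    (F : ℝ → ℝ) :
    Integrable (fun ω => F (g ω)) P ∧ ∫ ω, F (g ω) ∂P = (F 1 + F (-1)) / 2 := by
  have hA : MeasurableSet {ω | g ω = 1} := hg (measurableSet_singleton 1)
  have hB : MeasurableSet {ω | g ω = -1} := hg (measurableSet_singleton (-1))
  have hdisj : Disjoint {ω | g ω = 1} {ω | g ω = -1} := by
    rw [Set.disjoint_left]
    rintro ω h1' h2'
    simp only [Set.mem_setOf_eq] at h1' h2'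
    rw [h1'] at h2'; norm_num at h2'
  have hAB : P ({ω | g ω = 1} ∪ {ω | g ω = -1}) = 1 := by
    rw [measure_union hdisj hB, h1, h2, ENNReal.add_halves]
  have hae : ∀ᵐ ω ∂P, ω ∈ {ω | g ω = 1} ∪ {ω | g ω = -1} := by
    rw [ae_iff]
    have : {ω | ¬ ω ∈ ({ω | g ω = 1} ∪ {ω | g ω = -1})} =
        ({ω | g ω = 1} ∪ {ω | g ω = -1})ᶜ := rfl
    rw [this, prob_compl_eq_zero_iff (hA.union hB)]
    exact hAB
  set φ : Ω → ℝ := fun ω => Set.indicator {ω | g ω = 1} (fun _ => F 1) ω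
      + Set.indicator {ω | g ω = -1} (fun _ => F (-1)) ω with hφ
  have heq : (fun ω => F (g ω)) =ᵐ[P] φ := by
    filter_upwards [hae] with ω hω
    rcases hω with hω | hω
    · have hω' : g ω = 1 := hω
      have : ω ∉ {ω | g ω = -1} := by norm_num [Set.mem_setOf_eq, hω']
      simp [hφ, Set.indicator_of_mem hω, Set.indicator_of_notMem this, hω']
    · have hω' : g ω = -1 := hω
      have : ω ∉ {ω | g ω = 1} := by norm_num [Set.mem_setOf_eq, hω']
      simp [hφ, Set.indicator_of_mem hω, Set.indicator_of_notMem this, hω']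
  have hint : Integrable φ P :=
    ((integrable_const (F 1)).indicator hA).add ((integrable_const (F (-1))).indicator hB)
  constructor
  · exact hint.congr heq.symm
  · rw [integral_congr_ae heq, hφ, integral_add ((integrable_const (F 1)).indicator hA)
      ((integrable_const (F (-1))).indicator hB), integral_indicator_const _ hA,
      integral_indicator_const _ hB, measureReal_def, measureReal_def, h1, h2]
    have : ((1:ℝ≥0∞)/2).toReal = (1:ℝ)/2 := by simp
    rw [this]
    simp only [smul_eq_mul]
    ring

lemma pm_mgf {Ω : Type*} [MeasurableSpace Ω] (P : Measure Ω) [IsProbabilityMeasure P]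
    (g : Ω → ℝ) (hg : Measurable g)
    (h1 : P {ω | g ω = 1} = 1/2) (h2 : P {ω | g ω = -1} = 1/2) (c t : ℝ) :
    Integrable (fun ω => Real.exp (t * (c * g ω))) P ∧
      mgf (fun ω => c * g ω) P t ≤ Real.exp (t^2 * c^2 / 2) := by
  obtain ⟨hint, hval⟩ := pm_integral P g hg h1 h2 (fun x => Real.exp (t * (c * x)))
  refine ⟨hint, ?_⟩
  have : mgf (fun ω => c * g ω) P t = ∫ ω, Real.exp (t * (c * g ω)) ∂P := rfl
  rw [this, hval]
  have hcosh : (Real.exp (t * (c * 1)) + Real.exp (t * (c * (-1)))) / 2 = Real.cosh (t * c) := by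
    rw [Real.cosh_eq]; ring_nf
  rw [hcosh]
  calc Real.cosh (t * c) ≤ Real.exp ((t * c)^2 / 2) := Real.cosh_le_exp_half_sq _
    _ = Real.exp (t^2 * c^2 / 2) := by ring_nf

lemma hoeffding_sum {Ω : Type*} [MeasurableSpace Ω] (P : Measure Ω) [IsProbabilityMeasure P]
    (ε : ℕ → Ω → ℝ) (hmeas : ∀ n, Measurable (ε n))
    (hindep : iIndepFun
      (fun n : {n : ℕ // Squarefree n} => ε n) P)
    (hdist : ∀ n : ℕ, Squarefree n →
      P {ω | ε n ω = 1} = 1/2 ∧ P {ω | ε n ω = -1} = 1/2)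
    (c : {n : ℕ // Squarefree n} → ℝ) (C : ℝ) (hC : 0 < C) (hc : ∀ i, |c i| ≤ C)
    (s : Finset {n : ℕ // Squarefree n}) (N : ℕ) (hcard : s.card ≤ N)
    (a t : ℝ) (ht : 0 ≤ t) :
    P {ω | a ≤ ∑ i ∈ s, c i * ε i ω} ≤
      ENNReal.ofReal (Real.exp (-t * a + t^2 * C^2 * N / 2)) := by
  set Y : {n : ℕ // Squarefree n} → Ω → ℝ := fun i ω => c i * ε i ω with hY
  have hYmeas : ∀ i, Measurable (Y i) := fun i => (hmeas i).const_mul (c i)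
  have hYindep : iIndepFun Y P := by
    have := hindep.comp (fun i (x : ℝ) => c i * x) (fun i => measurable_const_mul (c i))
    exact this
  have hint : ∀ i ∈ s, Integrable (fun ω => Real.exp (t * Y i ω)) P :=
    fun i _ => (pm_mgf P (ε i) (hmeas i) (hdist i i.2).1 (hdist i i.2).2 (c i) t).1
  have hmgf : ∀ i ∈ s, mgf (Y i) P t ≤ Real.exp (t^2 * (c i)^2 / 2) :=
    fun i _ => (pm_mgf P (ε i) (hmeas i) (hdist i i.2).1 (hdist i i.2).2 (c i) t).2
  have hchern := measure_ge_le_exp_mul_mgf (μ := P) (X := ∑ i ∈ s, Y i) a ht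
    (hYindep.integrable_exp_mul_sum hYmeas hint)
  rw [hYindep.mgf_sum hYmeas] at hchern
  have hprod : ∏ i ∈ s, mgf (Y i) P t ≤ Real.exp (t^2 * C^2 * N / 2) := by
    calc ∏ i ∈ s, mgf (Y i) P t ≤ ∏ i ∈ s, Real.exp (t^2 * C^2 / 2) := by
          apply Finset.prod_le_prod (fun i _ => mgf_nonneg)
          intro i hi
          refine (hmgf i hi).trans (Real.exp_le_exp.2 ?_)
          have : (c i)^2 ≤ C^2 := by
            rw [← sq_abs]
            exact pow_le_pow_left₀ (abs_nonneg _) (hc i) 2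
          nlinarith [sq_nonneg t]
      _ = Real.exp (s.card * (t^2 * C^2 / 2)) := by
          rw [Finset.prod_const, ← Real.exp_nat_mul]
      _ ≤ Real.exp (t^2 * C^2 * N / 2) := by
          apply Real.exp_le_exp.2
          have hsc : (s.card : ℝ) ≤ N := by exact_mod_cast hcard
          nlinarith [sq_nonneg t, sq_nonneg C, mul_nonneg (sq_nonneg t) (sq_nonneg C)]
  have hset : {ω | a ≤ ∑ i ∈ s, c i * ε i ω} = {ω | a ≤ (∑ i ∈ s, Y i) ω} := by
    ext ω; simp [hY, Finset.sum_apply]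
  rw [hset]
  rw [ENNReal.le_ofReal_iff_toReal_le (measure_ne_top P _) (Real.exp_nonneg _)]
  calc (P {ω | a ≤ (∑ i ∈ s, Y i) ω}).toReal
      ≤ Real.exp (-t * a) * ∏ i ∈ s, mgf (Y i) P t := hchern
    _ ≤ Real.exp (-t * a) * Real.exp (t^2 * C^2 * N / 2) := by
        exact mul_le_mul_of_nonneg_left hprod (Real.exp_nonneg _)
    _ = Real.exp (-t * a + t^2 * C^2 * N / 2) := (Real.exp_add _ _).symm

lemma exists_net {X : Type*} [MetricSpace X] [CompactSpace X] {T : X → X} (hT : Continuous T)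
    (m : ℕ) {e : ℝ} (he : 0 < e) :
    ∃ s : Finset X, s.card = coverNum T m e ∧
      ∀ x : X, ∃ y ∈ s, ∀ k < m, dist (T^[k] x) (T^[k] y) < e := by
  have hne : {r : ℕ | ∃ s : Finset X, s.card = r ∧
      ∀ x : X, ∃ y ∈ s, ∀ k < m, dist (T^[k] x) (T^[k] y) < e}.Nonempty := by
    set U : X → Set X := fun y => {x | ∀ k, k ∈ Finset.range m → dist (T^[k] x) (T^[k] y) < e}
      with hU
    have hUopen : ∀ y, IsOpen (U y) := by
      intro y
      have : U y = ⋂ k ∈ Finset.range m,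
          (fun x => dist (T^[k] x) (T^[k] y)) ⁻¹' Set.Iio e := by
        ext x; simp [hU]
      rw [this]
      exact isOpen_biInter_finset fun k _ =>
        (isOpen_Iio.preimage ((hT.iterate k).dist continuous_const))
    have hcover : Set.univ ⊆ ⋃ y : X, U y := by
      intro x _
      exact Set.mem_iUnion.2 ⟨x, fun k _ => by simp [dist_self, he]⟩
    obtain ⟨tt, htt⟩ := isCompact_univ.elim_finite_subcover U hUopen hcover
    refine ⟨tt.card, tt, rfl, fun x => ?_⟩
    obtain ⟨y, hy, hxy⟩ := Set.mem_iUnion₂.1 (htt (Set.mem_univ x))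
    exact ⟨y, hy, fun k hk => hxy k (Finset.mem_range.2 hk)⟩
  have hmem := Nat.sInf_mem hne
  obtain ⟨s, hcard, hcov⟩ := hmem
  exact ⟨s, hcard, hcov⟩

lemma key_lemma {Ω : Type*} [MeasurableSpace Ω] (P : Measure Ω) [IsProbabilityMeasure P]
    (ε : ℕ → Ω → ℝ) (hmeas : ∀ n, Measurable (ε n))
    (hindep : iIndepFun
      (fun n : {n : ℕ // Squarefree n} => ε n) P)
    (hdist : ∀ n : ℕ, Squarefree n →
      P {ω | ε n ω = 1} = 1/2 ∧ P {ω | ε n ω = -1} = 1/2)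
    (μrand : ℕ → Ω → ℝ) (hμrand : ∀ n ω, μrand n ω = if Squarefree n then ε n ω else 0)
    {X : Type*} [MetricSpace X] [CompactSpace X]
    (T : X ≃ₜ X) (hent : ZeroTopEntropy (⇑T))
    (f : X → ℂ) (hf : Continuous f) (δ : ℝ) (hδ : 0 < δ) :
    ∃ G : Set Ω, MeasurableSet G ∧ P G = 1 ∧
      ∀ ω ∈ G, (∀ n, |μrand n ω| ≤ 1) →
        ∀ᶠ N : ℕ in Filter.atTop, ∀ x : X,
          Complex.abs (∑ n ∈ Finset.Icc 1 N, f ((⇑T)^[n] x) * (μrand n ω : ℂ)) ≤ N * δ := by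
  classical
  rcases isEmpty_or_nonempty X with hX | hX
  · exact ⟨Set.univ, MeasurableSet.univ, measure_univ, fun ω _ _ =>
      Filter.Eventually.of_forall (fun N x => (IsEmpty.false x).elim)⟩
  -- bound on f
  obtain ⟨u₀, -, hu₀⟩ := isCompact_univ.exists_isMaxOn Set.univ_nonempty
    (Complex.continuous_abs.comp hf).continuousOn
  set C : ℝ := Complex.abs (f u₀) + 1 with hCdef
  have hC : 0 < C := by positivity
  have hfC : ∀ u : X, Complex.abs (f u) ≤ C := fun u =>
    (hu₀ (Set.mem_univ u)).trans (by simp [hCdef])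
  -- constants
  set β : ℝ := δ^2 / (32 * C^2) with hβdef
  have hβ : 0 < β := by positivity
  obtain ⟨ε₀, hε₀, M₀, hM⟩ := hent (β/4) (by positivity)
  have huc := Metric.uniformContinuous_iff.mp (CompactSpace.uniformContinuous_of_continuous hf)
  obtain ⟨ε₁, hε₁, hucl⟩ := huc (δ/2) (by positivity)
  set e : ℝ := min ε₁ (ε₀/2) with hedef
  have he : 0 < e := lt_min hε₁ (by positivity)
  have he₀ : e < ε₀ := (min_le_right _ _).trans_lt (by linarith)
  have he₁ : e ≤ ε₁ := min_le_left _ _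
  choose net hnetcard hnetcov using fun m => exists_net T.continuous m he
  set M₁ : ℕ := max M₀ 1 with hM₁def
  -- the sums
  set S : X → ℕ → Ω → ℂ :=
    fun y N ω => ∑ n ∈ Finset.Icc 1 N, f ((⇑T)^[n] y) * (μrand n ω : ℂ) with hSdef
  set Bad : ℕ → Set Ω := fun N =>
    if M₁ < N then ⋃ y ∈ net (N+1), {ω | (N:ℝ)*δ/2 ≤ Complex.abs (S y N ω)} else ∅
    with hBaddef
  have hμmeas : ∀ n, Measurable (μrand n) := by
    intro n
    have : μrand n = fun ω => if Squarefree n then ε n ω else 0 := funext (hμrand n)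
    rw [this]
    by_cases h : Squarefree n
    · simpa [h] using hmeas n
    · simp [h]
  have hSmeas : ∀ y N, Measurable (fun ω => Complex.abs (S y N ω)) := by
    intro y N
    apply Complex.continuous_abs.measurable.comp
    apply Finset.measurable_sum
    intro n _
    exact (Complex.measurable_ofReal.comp (hμmeas n)).const_mul _
  have hBadmeas : ∀ N, MeasurableSet (Bad N) := by
    intro N
    rw [hBaddef]
    dsimp only
    split
    · exact MeasurableSet.biUnion (net (N+1)).countable_toSet
        (fun y _ => measurableSet_le measurable_const (hSmeas y N))
    · exact MeasurableSet.empty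
  -- single event bound
  have claim1 : ∀ (N : ℕ) (y : X),
      P {ω | (N:ℝ)*δ/2 ≤ Complex.abs (S y N ω)} ≤
        ENNReal.ofReal (4 * Real.exp (-(N:ℝ) * β)) := by
    intro N y
    set s₀ : Finset {n : ℕ // Squarefree n} := (Finset.Icc 1 N).subtype Squarefree with hs₀
    have hcard : s₀.card ≤ N := by
      rw [hs₀, Finset.card_subtype]
      calc ((Finset.Icc 1 N).filter Squarefree).card ≤ (Finset.Icc 1 N).card :=
            Finset.card_filter_le _ _
        _ = N := by simp [Nat.card_Icc]
    have hswitch : ∀ (r : ℕ → ℝ) (ω : Ω),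
        ∑ n ∈ Finset.Icc 1 N, r n * μrand n ω = ∑ i ∈ s₀, r (i:ℕ) * ε (i:ℕ) ω := by
      intro r ω
      have h1 : ∑ i ∈ s₀, r (i:ℕ) * ε (i:ℕ) ω
          = ∑ n ∈ (Finset.Icc 1 N).filter Squarefree, r n * ε n ω := by
        simpa using Finset.sum_subtype_eq_sum_filter
          (s := Finset.Icc 1 N) (p := Squarefree) (fun n => r n * ε n ω)
      rw [h1, Finset.sum_filter]
      apply Finset.sum_congr rfl
      intro n _
      rw [hμrand n ω]
      by_cases h : Squarefree n <;> simp [h]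
    have hre : ∀ ω : Ω, (S y N ω).re =
        ∑ i ∈ s₀, (f ((⇑T)^[(i:ℕ)] y)).re * ε (i:ℕ) ω := by
      intro ω
      rw [hSdef]
      simp only [Complex.re_sum]
      rw [← hswitch (fun n => (f ((⇑T)^[n] y)).re) ω]
      apply Finset.sum_congr rfl
      intro n _
      simp [Complex.mul_re]
    have him : ∀ ω : Ω, (S y N ω).im =
        ∑ i ∈ s₀, (f ((⇑T)^[(i:ℕ)] y)).im * ε (i:ℕ) ω := by
      intro ω
      rw [hSdef]
      simp only [Complex.im_sum]
      rw [← hswitch (fun n => (f ((⇑T)^[n] y)).im) ω]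
      apply Finset.sum_congr rfl
      intro n _
      simp [Complex.mul_im]
    set t : ℝ := δ / (4 * C^2) with htdef
    have ht : 0 ≤ t := by positivity
    have hexp : -t * ((N:ℝ)*δ/4) + t^2 * C^2 * N / 2 = -(N:ℝ) * β := by
      rw [htdef, hβdef]
      field_simp
      ring
    have hboundRe : ∀ i : {n : ℕ // Squarefree n}, |(f ((⇑T)^[(i:ℕ)] y)).re| ≤ C :=
      fun i => (Complex.abs_re_le_norm _).trans (hfC _)
    have hboundIm : ∀ i : {n : ℕ // Squarefree n}, |(f ((⇑T)^[(i:ℕ)] y)).im| ≤ C :=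
      fun i => (Complex.abs_im_le_norm _).trans (hfC _)
    have hb1 := hoeffding_sum P ε hmeas hindep hdist
      (fun i => (f ((⇑T)^[(i:ℕ)] y)).re) C hC hboundRe s₀ N hcard ((N:ℝ)*δ/4) t ht
    have hb2 := hoeffding_sum P ε hmeas hindep hdist
      (fun i => -(f ((⇑T)^[(i:ℕ)] y)).re) C hC (fun i => by simpa using hboundRe i)
      s₀ N hcard ((N:ℝ)*δ/4) t ht
    have hb3 := hoeffding_sum P ε hmeas hindep hdist
      (fun i => (f ((⇑T)^[(i:ℕ)] y)).im) C hC hboundIm s₀ N hcard ((N:ℝ)*δ/4) t ht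
    have hb4 := hoeffding_sum P ε hmeas hindep hdist
      (fun i => -(f ((⇑T)^[(i:ℕ)] y)).im) C hC (fun i => by simpa using hboundIm i)
      s₀ N hcard ((N:ℝ)*δ/4) t ht
    rw [hexp] at hb1 hb2 hb3 hb4
    have hincl : {ω | (N:ℝ)*δ/2 ≤ Complex.abs (S y N ω)} ⊆
        {ω | (N:ℝ)*δ/4 ≤ ∑ i ∈ s₀, (f ((⇑T)^[(i:ℕ)] y)).re * ε (i:ℕ) ω} ∪
        ({ω | (N:ℝ)*δ/4 ≤ ∑ i ∈ s₀, -(f ((⇑T)^[(i:ℕ)] y)).re * ε (i:ℕ) ω} ∪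
        ({ω | (N:ℝ)*δ/4 ≤ ∑ i ∈ s₀, (f ((⇑T)^[(i:ℕ)] y)).im * ε (i:ℕ) ω} ∪
        {ω | (N:ℝ)*δ/4 ≤ ∑ i ∈ s₀, -(f ((⇑T)^[(i:ℕ)] y)).im * ε (i:ℕ) ω})) := by
      intro ω hω
      simp only [Set.mem_setOf_eq] at hω
      have habs : Complex.abs (S y N ω) ≤ _ := Complex.norm_le_abs_re_add_abs_im (S y N ω)
      have hcases : (N:ℝ)*δ/4 ≤ |(S y N ω).re| ∨ (N:ℝ)*δ/4 ≤ |(S y N ω).im| := by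
        by_contra h
        push_neg at h
        linarith
      have hnegre : -(S y N ω).re = ∑ i ∈ s₀, -(f ((⇑T)^[(i:ℕ)] y)).re * ε (i:ℕ) ω := by
        rw [hre ω, ← Finset.sum_neg_distrib]
        simp [neg_mul]
      have hnegim : -(S y N ω).im = ∑ i ∈ s₀, -(f ((⇑T)^[(i:ℕ)] y)).im * ε (i:ℕ) ω := by
        rw [him ω, ← Finset.sum_neg_distrib]
        simp [neg_mul]
      rcases hcases with h | h
      · rcases le_abs.mp h with h' | h'
        · exact Or.inl (by rw [Set.mem_setOf_eq, ← hre ω]; exact h')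
        · exact Or.inr (Or.inl (by rw [Set.mem_setOf_eq, ← hnegre]; exact h'))
      · rcases le_abs.mp h with h' | h'
        · exact Or.inr (Or.inr (Or.inl (by rw [Set.mem_setOf_eq, ← him ω]; exact h')))
        · exact Or.inr (Or.inr (Or.inr (by rw [Set.mem_setOf_eq, ← hnegim]; exact h')))
    refine (measure_mono hincl).trans ?_
    refine le_trans (measure_union_le _ _) ?_
    refine le_trans (add_le_add le_rfl (measure_union_le _ _)) ?_
    refine le_trans (add_le_add le_rfl (add_le_add le_rfl (measure_union_le _ _))) ?_
    refine le_trans (add_le_add hb1 (add_le_add hb2 (add_le_add hb3 hb4))) ?_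
    rw [← ENNReal.ofReal_add (Real.exp_nonneg _) (Real.exp_nonneg _),
      ← ENNReal.ofReal_add (Real.exp_nonneg _) (by positivity),
      ← ENNReal.ofReal_add (Real.exp_nonneg _) (by positivity)]
    apply le_of_eq
    congr 1
    ring
  -- bound on the bad sets
  have claim2 : ∀ N : ℕ, P (Bad N) ≤
      ENNReal.ofReal ((4 * Real.exp (β/4)) * Real.exp (-(β/2)) ^ N) := by
    intro N
    by_cases hN : M₁ < N
    · have hBN : Bad N = ⋃ y ∈ net (N+1), {ω | (N:ℝ)*δ/2 ≤ Complex.abs (S y N ω)} := by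
        rw [hBaddef]; simp only [if_pos hN]
      rw [hBN]
      have hcardN : ((net (N+1)).card : ℝ) ≤ Real.exp ((N+1) * (β/4)) := by
        rw [hnetcard]
        exact le_of_lt (by exact_mod_cast hM e he he₀ (N+1) (lt_of_le_of_lt
          (le_trans (le_max_left M₀ 1) (le_of_lt hN)) (Nat.lt_succ_self N)))
      calc P (⋃ y ∈ net (N+1), {ω | (N:ℝ)*δ/2 ≤ Complex.abs (S y N ω)})
          ≤ ∑ y ∈ net (N+1), P {ω | (N:ℝ)*δ/2 ≤ Complex.abs (S y N ω)} :=
            measure_biUnion_finset_le _ _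
        _ ≤ ∑ _y ∈ net (N+1), ENNReal.ofReal (4 * Real.exp (-(N:ℝ) * β)) :=
            Finset.sum_le_sum (fun y _ => claim1 N y)
        _ = ((net (N+1)).card : ℝ≥0∞) * ENNReal.ofReal (4 * Real.exp (-(N:ℝ) * β)) := by
            rw [Finset.sum_const, nsmul_eq_mul]
        _ = ENNReal.ofReal (((net (N+1)).card : ℝ) * (4 * Real.exp (-(N:ℝ) * β))) := by
            rw [← ENNReal.ofReal_natCast, ← ENNReal.ofReal_mul (by positivity)]
        _ ≤ ENNReal.ofReal ((4 * Real.exp (β/4)) * Real.exp (-(β/2)) ^ N) := by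
            apply ENNReal.ofReal_le_ofReal
            have h1 : ((net (N+1)).card : ℝ) * (4 * Real.exp (-(N:ℝ) * β)) ≤
                Real.exp (((N:ℝ)+1) * (β/4)) * (4 * Real.exp (-(N:ℝ) * β)) := by
              apply mul_le_mul_of_nonneg_right _ (by positivity)
              exact_mod_cast hcardN
            refine h1.trans ?_
            rw [← Real.exp_nat_mul]
            rw [show Real.exp (((N:ℝ)+1) * (β/4)) * (4 * Real.exp (-(N:ℝ) * β)) =
              4 * Real.exp (((N:ℝ)+1) * (β/4) + (-(N:ℝ) * β)) by rw [Real.exp_add]; ring,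
              show (4 * Real.exp (β/4)) * Real.exp ((N:ℝ) * -(β/2)) =
              4 * Real.exp (β/4 + (N:ℝ) * -(β/2)) by rw [Real.exp_add]; ring]
            have hNn : (0:ℝ) ≤ (N:ℝ) := Nat.cast_nonneg N
            apply mul_le_mul_of_nonneg_left _ (by norm_num : (0:ℝ) ≤ 4)
            apply Real.exp_le_exp.2
            nlinarith
    · have hBN : Bad N = ∅ := by rw [hBaddef]; simp only [if_neg hN]
      rw [hBN, measure_empty]
      exact zero_le
  -- Borel-Cantelli
  have hsum : ∑' N : ℕ, P (Bad N) ≠ ⊤ := by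
    have hr0 : (0:ℝ) ≤ Real.exp (-(β/2)) := Real.exp_nonneg _
    have hr1 : Real.exp (-(β/2)) < 1 := Real.exp_lt_one_iff.mpr (by linarith)
    have hsummable : Summable (fun N : ℕ => (4 * Real.exp (β/4)) * Real.exp (-(β/2)) ^ N) :=
      (summable_geometric_of_lt_one hr0 hr1).mul_left _
    have hofr := ENNReal.ofReal_tsum_of_nonneg (fun N => by positivity) hsummable
    have hle : ∑' N : ℕ, P (Bad N) ≤
        ENNReal.ofReal (∑' N : ℕ, (4 * Real.exp (β/4)) * Real.exp (-(β/2)) ^ N) :=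
      le_trans (ENNReal.tsum_le_tsum claim2) (le_of_eq hofr.symm)
    exact ne_top_of_le_ne_top ENNReal.ofReal_ne_top hle
  have hBC := measure_limsup_atTop_eq_zero (μ := P) (s := Bad) hsum
  refine ⟨(Filter.limsup Bad Filter.atTop)ᶜ, (MeasurableSet.measurableSet_limsup hBadmeas).compl, ?_, ?_⟩
  · rw [prob_compl_eq_one_iff (MeasurableSet.measurableSet_limsup hBadmeas)]
    exact hBC
  · intro ω hω hb
    have hfreq : ∀ᶠ N in Filter.atTop, ω ∉ Bad N := by
      have hnf : ¬ (∃ᶠ N in Filter.atTop, ω ∈ Bad N) := by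
        rw [← Filter.mem_limsup_iff_frequently_mem]
        exact hω
      exact Filter.not_frequently.mp hnf
    filter_upwards [hfreq, Filter.eventually_gt_atTop M₁] with N hN hN1
    intro x
    have hBN : Bad N = ⋃ y ∈ net (N+1), {ω | (N:ℝ)*δ/2 ≤ Complex.abs (S y N ω)} := by
      rw [hBaddef]; simp only [if_pos hN1]
    rw [hBN] at hN
    obtain ⟨y, hy, hxy⟩ := hnetcov (N+1) x
    have hbY : Complex.abs (S y N ω) < (N:ℝ)*δ/2 := by
      by_contra h
      exact hN (Set.mem_biUnion hy (by simpa using not_lt.mp h))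
    have hdiff : Complex.abs (S x N ω - S y N ω) ≤ (N:ℝ) * (δ/2) := by
      have hsub : S x N ω - S y N ω =
          ∑ n ∈ Finset.Icc 1 N, (f ((⇑T)^[n] x) - f ((⇑T)^[n] y)) * (μrand n ω : ℂ) := by
        rw [hSdef]
        rw [← Finset.sum_sub_distrib]
        apply Finset.sum_congr rfl
        intro n _
        ring
      rw [hsub]
      calc Complex.abs (∑ n ∈ Finset.Icc 1 N,
            (f ((⇑T)^[n] x) - f ((⇑T)^[n] y)) * (μrand n ω : ℂ))
          ≤ ∑ n ∈ Finset.Icc 1 N,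
            Complex.abs ((f ((⇑T)^[n] x) - f ((⇑T)^[n] y)) * (μrand n ω : ℂ)) :=
            Complex.abs.sum_le _ _
        _ ≤ ∑ _n ∈ Finset.Icc 1 N, δ/2 := by
            apply Finset.sum_le_sum
            intro n hn
            rw [map_mul, Complex.abs_ofReal]
            have hn' : n < N + 1 := by
              rw [Finset.mem_Icc] at hn; omega
            have hd : dist ((⇑T)^[n] x) ((⇑T)^[n] y) < ε₁ := lt_of_lt_of_le (hxy n hn') he₁
            have hfd : Complex.abs (f ((⇑T)^[n] x) - f ((⇑T)^[n] y)) < δ/2 := by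
              rw [Complex.abs_apply', ← Complex.dist_eq]
              exact hucl hd
            calc Complex.abs (f ((⇑T)^[n] x) - f ((⇑T)^[n] y)) * |μrand n ω|
                ≤ Complex.abs (f ((⇑T)^[n] x) - f ((⇑T)^[n] y)) * 1 :=
                  mul_le_mul_of_nonneg_left (hb n) (AbsoluteValue.nonneg _ _)
              _ ≤ δ/2 := by rw [mul_one]; exact le_of_lt hfd
        _ = (N:ℝ) * (δ/2) := by
            rw [Finset.sum_const, Nat.card_Icc]
            simp
    calc Complex.abs (S x N ω)
        = Complex.abs (S y N ω + (S x N ω - S y N ω)) := by ring_nf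
      _ ≤ Complex.abs (S y N ω) + Complex.abs (S x N ω - S y N ω) := Complex.abs.add_le _ _
      _ ≤ (N:ℝ)*δ/2 + (N:ℝ)*(δ/2) := add_le_add (le_of_lt hbY) hdiff
      _ = (N:ℝ) * δ := by ring

lemma pm_union {Ω : Type*} [MeasurableSpace Ω] (P : Measure Ω) [IsProbabilityMeasure P]
    (g : Ω → ℝ) (hg : Measurable g)
    (h1 : P {ω | g ω = 1} = 1/2) (h2 : P {ω | g ω = -1} = 1/2) :
    P ({ω | g ω = 1} ∪ {ω | g ω = -1}) = 1 := by
  have hB : MeasurableSet {ω | g ω = -1} := hg (measurableSet_singleton (-1))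
  have hdisj : Disjoint {ω | g ω = 1} {ω | g ω = -1} := by
    rw [Set.disjoint_left]
    rintro ω h1' h2'
    simp only [Set.mem_setOf_eq] at h1' h2'
    rw [h1'] at h2'; norm_num at h2'
  rw [measure_union hdisj hB, h1, h2, ENNReal.add_halves]

end Aux

/-- The random Möbius function is almost surely orthogonal to every topological dynamical
system with zero topological entropy, with an exceptional set independent of `x` and `f`. -/
theorem random_moebius_orthogonal_to_zero_entropy
    {Ω : Type*} [MeasurableSpace Ω] (ℙ : Measure Ω) [IsProbabilityMeasure ℙ]
    (ε : ℕ → Ω → ℝ) (hmeas : ∀ n, Measurable (ε n))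
    (hindep : ProbabilityTheory.iIndepFun
      (fun n : {n : ℕ // Squarefree n} => ε n) ℙ)
    (hdist : ∀ n : ℕ, Squarefree n →
      ℙ {ω | ε n ω = 1} = 1/2 ∧ ℙ {ω | ε n ω = -1} = 1/2)
    (μrand : ℕ → Ω → ℝ)
    (hμrand : ∀ n ω, μrand n ω = if Squarefree n then ε n ω else 0)
    {X : Type*} [MetricSpace X] [CompactSpace X]
    (T : X ≃ₜ X) (hent : ZeroTopEntropy (⇑T)) :
    ∃ Ω' : Set Ω, MeasurableSet Ω' ∧ ℙ Ω' = 1 ∧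
      ∀ ω ∈ Ω', ∀ x : X, ∀ f : X → ℂ, Continuous f →
        Filter.Tendsto
          (fun N : ℕ => (N : ℂ)⁻¹ *
            ∑ n ∈ Finset.Icc 1 N, f ((⇑T)^[n] x) * (μrand n ω : ℂ))
          Filter.atTop (nhds 0) := by
  classical
  obtain ⟨D, hDc, hDd⟩ := TopologicalSpace.exists_countable_dense C(X, ℂ)
  choose G hGmeas hGone hGprop using fun (g : C(X, ℂ)) (k : ℕ) =>
    key_lemma ℙ ε hmeas hindep hdist μrand hμrand T hent g g.continuous (1/((k:ℝ)+1))
      (by positivity)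
  set E : Set Ω := ⋂ n : {n : ℕ // Squarefree n},
    ({ω | ε (n:ℕ) ω = 1} ∪ {ω | ε (n:ℕ) ω = -1}) with hE
  have hsing : ∀ n : ℕ, MeasurableSet {ω | ε n ω = 1} ∧ MeasurableSet {ω | ε n ω = -1} :=
    fun n => ⟨hmeas n (measurableSet_singleton 1), hmeas n (measurableSet_singleton (-1))⟩
  have hEmeas : MeasurableSet E :=
    MeasurableSet.iInter fun n => ((hsing n).1.union (hsing n).2)
  have hEone : ∀ n : {n : ℕ // Squarefree n},
      ℙ ({ω | ε (n:ℕ) ω = 1} ∪ {ω | ε (n:ℕ) ω = -1}) = 1 :=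
    fun n => pm_union ℙ (ε n) (hmeas n) (hdist n n.2).1 (hdist n n.2).2
  set Ω' : Set Ω := E ∩ ⋂ g ∈ D, ⋂ k : ℕ, G g k with hΩ'
  have hΩ'meas : MeasurableSet Ω' :=
    hEmeas.inter (MeasurableSet.biInter hDc fun g _ => MeasurableSet.iInter fun k => hGmeas g k)
  have hΩ'ae : Ω' ∈ MeasureTheory.ae ℙ := by
    apply Filter.inter_mem
    · rw [hE]
      rw [countable_iInter_mem]
      intro n
      exact mem_ae_iff.2 ((prob_compl_eq_zero_iff ((hsing n).1.union (hsing n).2)).2 (hEone n))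
    · rw [countable_bInter_mem hDc]
      intro g _
      rw [countable_iInter_mem]
      intro k
      exact mem_ae_iff.2 ((prob_compl_eq_zero_iff (hGmeas g k)).2 (hGone g k))
  refine ⟨Ω', hΩ'meas, (prob_compl_eq_zero_iff hΩ'meas).1 (mem_ae_iff.1 hΩ'ae), ?_⟩
  intro ω hω x f hf
  have hωE : ω ∈ E := hω.1
  have hb : ∀ n, |μrand n ω| ≤ 1 := by
    intro n
    rw [hμrand]
    by_cases h : Squarefree n
    · rw [if_pos h]
      have := Set.mem_iInter.1 hωE ⟨n, h⟩
      rcases this with h' | h'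
      · rw [Set.mem_setOf_eq] at h'; rw [h']; norm_num
      · rw [Set.mem_setOf_eq] at h'; rw [h']; norm_num
    · rw [if_neg h]; norm_num
  rw [Metric.tendsto_atTop]
  intro ρ hρ
  obtain ⟨k, hk⟩ : ∃ k : ℕ, 1/((k:ℝ)+1) < ρ/4 := by
    obtain ⟨k, hk⟩ := exists_nat_gt (4/ρ)
    refine ⟨k, ?_⟩
    have hk1 : (0:ℝ) < (k:ℝ)+1 := by positivity
    rw [div_lt_div_iff₀ hk1 (by norm_num : (0:ℝ) < 4)]
    have h4 : 4 < ρ * k := by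
      have := (div_lt_iff₀ hρ).1 hk
      nlinarith
    nlinarith
  obtain ⟨g, hgD, hgdist⟩ : ∃ g ∈ D, dist (⟨f, hf⟩ : C(X,ℂ)) g < ρ/4 := by
    obtain ⟨g, hg1, hg2⟩ := Metric.dense_iff.mp hDd (⟨f, hf⟩ : C(X,ℂ)) (ρ/4) (by positivity)
    exact ⟨g, hg2, by rw [dist_comm]; exact Metric.mem_ball.1 hg1⟩
  have hωG : ω ∈ G g k := by
    have := hω.2
    have h1 := Set.mem_iInter₂.1 this g hgD
    exact Set.mem_iInter.1 h1 k
  have hG := hGprop g k ω hωG hb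
  rw [Filter.eventually_atTop] at hG
  obtain ⟨N₀, hN₀⟩ := hG
  refine ⟨max N₀ 1, fun N hN => ?_⟩
  have hN1 : 1 ≤ N := le_trans (le_max_right _ _) hN
  have hNpos : (0:ℝ) < (N:ℝ) := by exact_mod_cast hN1
  have hgb := hN₀ N (le_trans (le_max_left _ _) hN) x
  -- difference bound
  have hdiff : Complex.abs ((∑ n ∈ Finset.Icc 1 N, f ((⇑T)^[n] x) * (μrand n ω : ℂ)) -
      (∑ n ∈ Finset.Icc 1 N, g ((⇑T)^[n] x) * (μrand n ω : ℂ))) ≤ (N:ℝ) * (ρ/4) := by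
    rw [← Finset.sum_sub_distrib]
    have : ∀ n ∈ Finset.Icc 1 N,
        f ((⇑T)^[n] x) * (μrand n ω : ℂ) - g ((⇑T)^[n] x) * (μrand n ω : ℂ)
        = (f ((⇑T)^[n] x) - g ((⇑T)^[n] x)) * (μrand n ω : ℂ) := by
      intro n _; ring
    rw [Finset.sum_congr rfl this]
    calc Complex.abs (∑ n ∈ Finset.Icc 1 N,
          (f ((⇑T)^[n] x) - g ((⇑T)^[n] x)) * (μrand n ω : ℂ))
        ≤ ∑ n ∈ Finset.Icc 1 N,
          Complex.abs ((f ((⇑T)^[n] x) - g ((⇑T)^[n] x)) * (μrand n ω : ℂ)) :=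
          Complex.abs.sum_le _ _
      _ ≤ ∑ _n ∈ Finset.Icc 1 N, ρ/4 := by
          apply Finset.sum_le_sum
          intro n _
          rw [map_mul, Complex.abs_ofReal]
          have hfg : Complex.abs (f ((⇑T)^[n] x) - g ((⇑T)^[n] x)) ≤ ρ/4 := by
            rw [Complex.abs_apply', ← Complex.dist_eq]
            have h1 : dist ((⟨f, hf⟩ : C(X,ℂ)) ((⇑T)^[n] x)) (g ((⇑T)^[n] x)) ≤
                dist (⟨f, hf⟩ : C(X,ℂ)) g := ContinuousMap.dist_apply_le_dist _
            exact le_trans h1 (le_of_lt hgdist)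
          calc Complex.abs (f ((⇑T)^[n] x) - g ((⇑T)^[n] x)) * |μrand n ω|
              ≤ Complex.abs (f ((⇑T)^[n] x) - g ((⇑T)^[n] x)) * 1 :=
                mul_le_mul_of_nonneg_left (hb n) (AbsoluteValue.nonneg _ _)
            _ ≤ ρ/4 := by rw [mul_one]; exact hfg
      _ = (N:ℝ) * (ρ/4) := by
          rw [Finset.sum_const, Nat.card_Icc]
          simp
  have htot : Complex.abs (∑ n ∈ Finset.Icc 1 N, f ((⇑T)^[n] x) * (μrand n ω : ℂ))
      ≤ (N:ℝ) * (1/((k:ℝ)+1)) + (N:ℝ) * (ρ/4) := by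
    calc Complex.abs (∑ n ∈ Finset.Icc 1 N, f ((⇑T)^[n] x) * (μrand n ω : ℂ))
        = Complex.abs ((∑ n ∈ Finset.Icc 1 N, g ((⇑T)^[n] x) * (μrand n ω : ℂ)) +
          ((∑ n ∈ Finset.Icc 1 N, f ((⇑T)^[n] x) * (μrand n ω : ℂ)) -
           (∑ n ∈ Finset.Icc 1 N, g ((⇑T)^[n] x) * (μrand n ω : ℂ)))) := by ring_nf
      _ ≤ Complex.abs (∑ n ∈ Finset.Icc 1 N, g ((⇑T)^[n] x) * (μrand n ω : ℂ)) +
          Complex.abs ((∑ n ∈ Finset.Icc 1 N, f ((⇑T)^[n] x) * (μrand n ω : ℂ)) -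
           (∑ n ∈ Finset.Icc 1 N, g ((⇑T)^[n] x) * (μrand n ω : ℂ))) := Complex.abs.add_le _ _
      _ ≤ (N:ℝ) * (1/((k:ℝ)+1)) + (N:ℝ) * (ρ/4) := add_le_add hgb hdiff
  rw [dist_zero_right, norm_mul, norm_inv, Complex.norm_natCast, Complex.norm_eq_abs]
  calc ((N:ℝ))⁻¹ * Complex.abs (∑ n ∈ Finset.Icc 1 N, f ((⇑T)^[n] x) * (μrand n ω : ℂ))
      ≤ ((N:ℝ))⁻¹ * ((N:ℝ) * (1/((k:ℝ)+1)) + (N:ℝ) * (ρ/4)) := by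
        apply mul_le_mul_of_nonneg_left htot (by positivity)
    _ = 1/((k:ℝ)+1) + ρ/4 := by
        field_simp
    _ < ρ := by linarith
end

section
/- Let f : ℝ → ℝ be a convex function equal everywhere to its Taylor series at 0 (f(x) = ∑_{n≥0} f^{(n)}(0) xⁿ/n! for all x ∈ ℝ), and suppose that for every n ∈ ℕ one has f^{(2n)}(0) = f^{(n)}(0) > 0. Let (Ω,ℱ,ℙ) be a probability space, 𝒢 ⊆ ℱ a sub-σ-algebra, and Y an integrable random variable with E[Y | 𝒢] = 0 almost surely and |Y| ≤ c almost surely for some constant c > 0. Then for every t > 0, E[ f(tY) | 𝒢 ] ≤ f( t²c²/2 ) almost surely. -/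
open MeasureTheory

private lemma two_pow_mul_factorial_le : ∀ k : ℕ, 2 ^ k * k.factorial ≤ (2 * k).factorial
  | 0 => le_refl 1
  | (k+1) => by
    have ih := two_pow_mul_factorial_le k
    have : 2 * (k + 1) = (2 * k + 1) + 1 := by ring
    rw [this, Nat.factorial_succ, Nat.factorial_succ, Nat.factorial_succ]
    calc 2 ^ (k+1) * ((k+1) * k.factorial)
        = (k+1) * 2 * (2 ^ k * k.factorial) := by ring
      _ ≤ (2*k+1+1) * (2 ^ k * k.factorial) := by
          apply Nat.mul_le_mul_right; omega
      _ ≤ (2*k+1+1) * ((2*k+1) * (2*k).factorial) := by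
          apply Nat.mul_le_mul_left
          calc 2 ^ k * k.factorial ≤ (2*k).factorial := ih
            _ ≤ (2*k+1) * (2*k).factorial := Nat.le_mul_of_pos_left _ (by omega)

/-- Key analytic inequality: `(f x + f (-x))/2 ≤ f (x^2/2)`. -/
private lemma key_analytic (f : ℝ → ℝ)
    (htaylor : ∀ x : ℝ,
      HasSum (fun n : ℕ => iteratedDeriv n f 0 * x ^ n / (n.factorial : ℝ)) (f x))
    (hderiv : ∀ n : ℕ, iteratedDeriv (2 * n) f 0 = iteratedDeriv n f 0 ∧
      0 < iteratedDeriv n f 0) (x : ℝ) :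
    (f x + f (-x)) / 2 ≤ f (x ^ 2 / 2) := by
  set a : ℕ → ℝ := fun n => iteratedDeriv n f 0 with ha
  have h1 := (htaylor x).add (htaylor (-x))
  have h2 := h1.div_const 2
  -- h2 : HasSum (fun n => (a n * x^n / n! + a n * (-x)^n / n!)/2) ((f x + f (-x))/2)
  set g : ℕ → ℝ := fun n => (a n * x ^ n / n.factorial + a n * (-x) ^ n / n.factorial) / 2
    with hg
  have hinj : Function.Injective (fun k : ℕ => 2 * k) := fun a b h => by
    simp only [] at h; omega
  have hzero : ∀ n ∉ Set.range (fun k : ℕ => 2 * k), g n = 0 := by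
    intro n hn
    have hodd : Odd n := by
      rcases Nat.even_or_odd n with he | ho
      · obtain ⟨j, hj⟩ := he
        exact absurd ⟨j, by simp only []; omega⟩ hn
      · exact ho
    simp only [hg, hodd.neg_pow]
    ring
  have h3 : HasSum (g ∘ fun k : ℕ => 2 * k) ((f x + f (-x)) / 2) :=
    (hinj.hasSum_iff hzero).2 h2
  have h4 := htaylor (x ^ 2 / 2)
  refine hasSum_le (fun k => ?_) h3 h4
  have hfac : (2 ^ k * k.factorial : ℝ) ≤ ((2 * k).factorial : ℝ) := by
    exact_mod_cast two_pow_mul_factorial_le k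
  have hak : 0 < a k := (hderiv k).2
  have heven : (-x) ^ (2 * k) = x ^ (2 * k) := (even_two_mul k).neg_pow x
  have hlhs : (g ∘ fun k : ℕ => 2 * k) k = a k * x ^ (2 * k) / (2 * k).factorial := by
    show (a (2*k) * x ^ (2*k) / ((2*k).factorial : ℝ)
      + a (2*k) * (-x) ^ (2*k) / ((2*k).factorial : ℝ)) / 2 = _
    rw [heven]
    have hak2 : a (2 * k) = a k := (hderiv k).1
    rw [hak2]; ring
  rw [hlhs]
  have hrhs : a k * (x ^ 2 / 2) ^ k / k.factorial
      = a k * x ^ (2 * k) / (2 ^ k * k.factorial) := by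
    rw [div_pow, pow_mul]
    ring
  rw [hrhs]
  have hnum : 0 ≤ a k * x ^ (2 * k) :=
    mul_nonneg hak.le (by rw [pow_mul]; exact pow_nonneg (sq_nonneg x) k)
  have h2k : (0 : ℝ) < 2 ^ k * k.factorial :=
    mul_pos (pow_pos two_pos k) (Nat.cast_pos.2 (Nat.factorial_pos k))
  exact div_le_div_of_nonneg_left hnum h2k hfac

/-- If `f` is convex, equals its Taylor series at `0`, and satisfies
`f^{(2n)}(0) = f^{(n)}(0) > 0` for all `n`, and `Y` is a bounded random variable with
`E[Y | 𝒢] = 0` a.s. and `|Y| ≤ c` a.s., then `E[f(tY) | 𝒢] ≤ f(t²c²/2)` a.s. for all `t > 0`. -/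
theorem condexp_convex_taylor_bound
    (f : ℝ → ℝ) (hconv : ConvexOn ℝ Set.univ f)
    (htaylor : ∀ x : ℝ,
      HasSum (fun n : ℕ => iteratedDeriv n f 0 * x ^ n / (n.factorial : ℝ)) (f x))
    (hderiv : ∀ n : ℕ, iteratedDeriv (2 * n) f 0 = iteratedDeriv n f 0 ∧
      0 < iteratedDeriv n f 0)
    {Ω : Type*} {mΩ : MeasurableSpace Ω} (ℙ : Measure Ω) [IsProbabilityMeasure ℙ]
    (m : MeasurableSpace Ω) (hm : m ≤ mΩ)
    (Y : Ω → ℝ) (hYint : Integrable Y ℙ)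
    (hcond : ℙ[Y | m] =ᵐ[ℙ] 0)
    (c : ℝ) (hc : 0 < c) (hbdd : ∀ᵐ ω ∂ℙ, |Y ω| ≤ c) :
    ∀ t : ℝ, 0 < t →
      ∀ᵐ ω ∂ℙ, (ℙ[fun ω' => f (t * Y ω') | m]) ω ≤ f (t ^ 2 * c ^ 2 / 2) := by
  intro t ht
  have hfc : Continuous f := by
    rw [← continuousOn_univ]
    exact hconv.continuousOn isOpen_univ
  set A : ℝ := (f (t * c) + f (-(t * c))) / 2 with hA
  set B : ℝ := (f (t * c) - f (-(t * c))) / (2 * c) with hB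
  -- pointwise convexity bound
  have hpt : ∀ᵐ ω ∂ℙ, f (t * Y ω) ≤ A + B * Y ω := by
    filter_upwards [hbdd] with ω hω
    set y := Y ω
    have hy1 : -c ≤ y := (abs_le.1 hω).1
    have hy2 : y ≤ c := (abs_le.1 hω).2
    set lam : ℝ := (c - y) / (2 * c) with hlam
    have hlam0 : 0 ≤ lam := by
      apply div_nonneg <;> linarith
    have hlam1 : 0 ≤ 1 - lam := by
      rw [hlam]
      rw [sub_nonneg, div_le_one (by linarith)]
      linarith
    have hsum : lam + (1 - lam) = 1 := by ring
    have hcomb := hconv.2 (Set.mem_univ (-(t * c))) (Set.mem_univ (t * c))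
      hlam0 hlam1 hsum
    have hpoint : lam • (-(t * c)) + (1 - lam) • (t * c) = t * y := by
      simp only [smul_eq_mul, hlam]
      field_simp
      ring
    rw [hpoint] at hcomb
    have : lam * f (-(t * c)) + (1 - lam) * f (t * c) = A + B * y := by
      simp only [hA, hB, hlam]
      field_simp
      ring
    simpa [this] using hcomb
  -- integrability
  have hYm : AEStronglyMeasurable[mΩ] Y ℙ := hYint.aestronglyMeasurable
  have hgm : AEStronglyMeasurable[mΩ] (fun ω => f (t * Y ω)) ℙ :=
    hfc.comp_aestronglyMeasurable (aestronglyMeasurable_const.mul hYm)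
  obtain ⟨M, hM⟩ := (isCompact_Icc (a := -(t*c)) (b := t*c)).exists_bound_of_continuousOn
    hfc.continuousOn
  have hgint : Integrable (fun ω => f (t * Y ω)) ℙ := by
    refine Integrable.mono' (integrable_const M) hgm ?_
    filter_upwards [hbdd] with ω hω
    apply hM
    constructor
    · nlinarith [(abs_le.1 hω).1]
    · nlinarith [(abs_le.1 hω).2]
  have hrint : Integrable (fun ω => A + B * Y ω) ℙ :=
    (integrable_const A).add (hYint.const_mul B)
  -- condexp of the affine function
  have h1 : ℙ[fun ω => A + B * Y ω | m] =ᵐ[ℙ] fun _ => A := by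
    have hadd : ℙ[(fun _ => A) + (fun ω => B * Y ω) | m]
        =ᵐ[ℙ] ℙ[fun _ => A | m] + ℙ[fun ω => B * Y ω | m] :=
      condExp_add (integrable_const A) (hYint.const_mul B) m
    have hsmul : ℙ[fun ω => B * Y ω | m] =ᵐ[ℙ] fun ω => B * (ℙ[Y | m]) ω := by
      have := condExp_smul (μ := ℙ) (m := m) (B : ℝ) Y
      exact this
    have hzero : (fun ω => B * (ℙ[Y | m]) ω) =ᵐ[ℙ] fun _ => (0 : ℝ) := by
      filter_upwards [hcond] with ω hω
      simp [hω]
    calc ℙ[fun ω => A + B * Y ω | m]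
        =ᵐ[ℙ] ℙ[fun _ => A | m] + ℙ[fun ω => B * Y ω | m] := hadd
      _ =ᵐ[ℙ] fun _ => A := by
          rw [condExp_const hm]
          filter_upwards [hsmul.trans hzero] with ω hω
          simp only [Pi.add_apply, hω]
          ring
  have hmono := condExp_mono (m := m) hgint hrint hpt
  have hfinal : A ≤ f (t ^ 2 * c ^ 2 / 2) := by
    have := key_analytic f htaylor hderiv (t * c)
    have heq : (t * c) ^ 2 / 2 = t ^ 2 * c ^ 2 / 2 := by ring
    rwa [heq] at this
  filter_upwards [hmono, h1] with ω h1ω h2ω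
  calc (ℙ[fun ω' => f (t * Y ω') | m]) ω ≤ (ℙ[fun ω => A + B * Y ω | m]) ω := h1ω
    _ = A := h2ω
    _ ≤ f (t ^ 2 * c ^ 2 / 2) := hfinal
end

section
/- (Coquet–Kamae–Mendès-France) Let (P_n) and (Q_n) be sequences of Borel probability measures on the circle ℝ/2πℤ converging weakly to the probability measures P and Q respectively. Then limsup_{n→∞} G(P_n, Q_n) ≤ G(P, Q), where G denotes the affinity. -/
open MeasureTheory

/-- The affinity `G(μ,ν) = ∫ √((dμ/dλ)(dν/dλ)) dλ` with dominating measure `λ = μ + ν`. -/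
noncomputable def affinity {α : Type*} [MeasurableSpace α] (μ ν : Measure α) : ℝ :=
  ∫ x, Real.sqrt ((μ.rnDeriv (μ + ν) x).toReal * (ν.rnDeriv (μ + ν) x).toReal) ∂(μ + ν)

open Filter

lemma sqrt_add_le' (x y : ℝ) (hx : 0 ≤ x) (hy : 0 ≤ y) :
    Real.sqrt (x + y) ≤ Real.sqrt x + Real.sqrt y := by
  have h : Real.sqrt (x + y) ≤ Real.sqrt ((Real.sqrt x + Real.sqrt y)^2) := by
    apply Real.sqrt_le_sqrt
    nlinarith [Real.sq_sqrt hx, Real.sq_sqrt hy, Real.sqrt_nonneg x, Real.sqrt_nonneg y]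
  rwa [Real.sqrt_sq (by positivity)] at h

lemma sqrt_mul_le_half (f g u : ℝ) (hf : 0 ≤ f) (hg : 0 ≤ g) (hu : 0 < u) :
    Real.sqrt (f * g) ≤ (u * f + u⁻¹ * g) / 2 := by
  have h1 : Real.sqrt (f * g) = Real.sqrt (u * f) * Real.sqrt (u⁻¹ * g) := by
    rw [← Real.sqrt_mul (by positivity)]
    congr 1
    field_simp
  rw [h1]
  nlinarith [sq_nonneg (Real.sqrt (u * f) - Real.sqrt (u⁻¹ * g)),
    Real.sq_sqrt (mul_nonneg hu.le hf),
    Real.sq_sqrt (mul_nonneg (by positivity : (0:ℝ) ≤ u⁻¹) hg),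
    Real.sqrt_nonneg (u * f), Real.sqrt_nonneg (u⁻¹ * g)]

lemma sqrt_div_mul (c d : ℝ) (hc : 0 ≤ c) (hd : 0 < d) :
    Real.sqrt (c / d) * d = Real.sqrt (d * c) := by
  have h : Real.sqrt (c / d) * d = Real.sqrt (c / d) * Real.sqrt (d ^ 2) := by
    rw [Real.sqrt_sq hd.le]
  rw [h, ← Real.sqrt_mul (by positivity)]
  congr 1
  field_simp

lemma affinity_nonneg {α : Type*} [MeasurableSpace α] (μ ν : Measure α) :
    0 ≤ affinity μ ν :=
  integral_nonneg fun _ => Real.sqrt_nonneg _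

lemma affinity_le_of_bound {α : Type*} [MeasurableSpace α]
    (μ ν : Measure α) [IsFiniteMeasure μ] [IsFiniteMeasure ν]
    (u : α → ℝ) (hu : Measurable u) (a b : ℝ) (ha : 0 < a)
    (h1 : ∀ x, a ≤ u x) (h2 : ∀ x, u x ≤ b) :
    affinity μ ν ≤ (∫ x, u x ∂μ + ∫ x, (u x)⁻¹ ∂ν) / 2 := by
  set m := μ + ν with hm
  have hμm : μ ≪ m := Measure.absolutelyContinuous_of_le (Measure.le_add_right le_rfl)
  have hνm : ν ≪ m := Measure.absolutelyContinuous_of_le (Measure.le_add_left le_rfl)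
  set f := fun x => (μ.rnDeriv m x).toReal with hfdef
  set g := fun x => (ν.rnDeriv m x).toReal with hgdef
  have hupos : ∀ x, 0 < u x := fun x => lt_of_lt_of_le ha (h1 x)
  have hfm : Measurable f := (Measure.measurable_rnDeriv _ _).ennreal_toReal
  have hgm : Measurable g := (Measure.measurable_rnDeriv _ _).ennreal_toReal
  have hfint : Integrable f m := Measure.integrable_toReal_rnDeriv
  have hgint : Integrable g m := Measure.integrable_toReal_rnDeriv
  have e1 : ∫ x, f x * u x ∂m = ∫ x, u x ∂μ := by
    rw [← integral_rnDeriv_smul hμm]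
    simp [smul_eq_mul, hfdef]
  have e2 : ∫ x, g x * (u x)⁻¹ ∂m = ∫ x, (u x)⁻¹ ∂ν := by
    rw [← integral_rnDeriv_smul hνm]
    simp [smul_eq_mul, hgdef]
  have hint1 : Integrable (fun x => f x * u x) m := by
    have h := hfint.bdd_mul (c := |b|) (f := u) hu.aestronglyMeasurable ?_
    · exact h.congr (by filter_upwards with x; ring_nf)
    · filter_upwards with x
      rw [Real.norm_eq_abs, abs_of_pos (hupos x)]
      exact (h2 x).trans (le_abs_self b)
  have hint2 : Integrable (fun x => g x * (u x)⁻¹) m := by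
    have h := hgint.bdd_mul (c := a⁻¹) (f := fun x => (u x)⁻¹) hu.inv.aestronglyMeasurable ?_
    · exact h.congr (by filter_upwards with x; ring_nf)
    · filter_upwards with x
      rw [Real.norm_eq_abs, abs_of_pos (inv_pos.2 (hupos x))]
      exact inv_anti₀ ha (h1 x)
  have hfnn : ∀ x, 0 ≤ f x := fun x => ENNReal.toReal_nonneg
  have hgnn : ∀ x, 0 ≤ g x := fun x => ENNReal.toReal_nonneg
  have hintl : Integrable (fun x => Real.sqrt (f x * g x)) m := by
    apply Integrable.mono' ((hfint.add hgint).div_const 2) ((hfm.mul hgm).sqrt.aestronglyMeasurable)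
    filter_upwards with x
    rw [Real.norm_eq_abs, abs_of_nonneg (Real.sqrt_nonneg _)]
    have h := sqrt_mul_le_half (f x) (g x) 1 (hfnn x) (hgnn x) one_pos
    simpa using h
  have key : affinity μ ν ≤ ∫ x, (u x * f x + (u x)⁻¹ * g x) / 2 ∂m := by
    apply integral_mono hintl (by
      apply Integrable.div_const
      exact (hint1.congr (by filter_upwards with x; ring_nf)).add
        (hint2.congr (by filter_upwards with x; ring_nf)))
    intro x
    exact sqrt_mul_le_half (f x) (g x) (u x) (hfnn x) (hgnn x) (hupos x)
  refine key.trans (le_of_eq ?_)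
  rw [integral_div]
  congr 1
  rw [integral_add (hint1.congr (by filter_upwards with x; ring_nf))
    (hint2.congr (by filter_upwards with x; ring_nf))]
  rw [← e1, ← e2]
  congr 1
  · exact integral_congr_ae (by filter_upwards with x; ring)
  · exact integral_congr_ae (by filter_upwards with x; ring)

lemma integrable_of_bdd' {α : Type*} [MeasurableSpace α] {m : Measure α} [IsFiniteMeasure m]
    {h : α → ℝ} (hmeas : AEStronglyMeasurable h m) {C : ℝ} (hC : ∀ x, |h x| ≤ C) :
    Integrable h m :=
  ⟨hmeas, HasFiniteIntegral.of_bounded (ae_of_all _ hC)⟩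

set_option maxHeartbeats 2000000 in
lemma exists_good_pair {α : Type*} [MeasurableSpace α] [TopologicalSpace α]
    [TopologicalSpace.PseudoMetrizableSpace α] [NormalSpace α] [BorelSpace α]
    (P Q : Measure α) [IsProbabilityMeasure P] [IsProbabilityMeasure Q]
    {ε : ℝ} (hε : 0 < ε) :
    ∃ (u : C(α, ℝ)) (a b : ℝ), 0 < a ∧ (∀ x, a ≤ u x) ∧ (∀ x, u x ≤ b) ∧
      (∫ x, u x ∂P + ∫ x, (u x)⁻¹ ∂Q) / 2 ≤ affinity P Q + ε := by
  set m := P + Q with hm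
  have hPm : P ≪ m := Measure.absolutelyContinuous_of_le (Measure.le_add_right le_rfl)
  have hQm : Q ≪ m := Measure.absolutelyContinuous_of_le (Measure.le_add_left le_rfl)
  have hmuniv : (m Set.univ).toReal = 2 := by
    simp [hm, Measure.add_apply, measure_univ]
    norm_num
  set f := fun x => (P.rnDeriv m x).toReal with hfdef
  set g := fun x => (Q.rnDeriv m x).toReal with hgdef
  have hfm : Measurable f := (Measure.measurable_rnDeriv _ _).ennreal_toReal
  have hgm : Measurable g := (Measure.measurable_rnDeriv _ _).ennreal_toReal
  set f' := fun x => min (f x) 1 with hf'def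
  set g' := fun x => min (g x) 1 with hg'def
  have hf'm : Measurable f' := hfm.min measurable_const
  have hg'm : Measurable g' := hgm.min measurable_const
  have hf'0 : ∀ x, 0 ≤ f' x := fun x => le_min ENNReal.toReal_nonneg zero_le_one
  have hg'0 : ∀ x, 0 ≤ g' x := fun x => le_min ENNReal.toReal_nonneg zero_le_one
  have hf'1 : ∀ x, f' x ≤ 1 := fun x => min_le_right _ _
  have hg'1 : ∀ x, g' x ≤ 1 := fun x => min_le_right _ _
  have hff' : f' =ᵐ[m] f := by
    filter_upwards [Measure.rnDeriv_le_one_of_le (Measure.le_add_right le_rfl : P ≤ m)] with x hx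
    simp only [Pi.one_apply] at hx
    have hx1 : f x ≤ 1 := by
      simpa [hfdef] using ENNReal.toReal_mono ENNReal.one_ne_top hx
    exact min_eq_left hx1
  have hgg' : g' =ᵐ[m] g := by
    filter_upwards [Measure.rnDeriv_le_one_of_le (Measure.le_add_left le_rfl : Q ≤ m)] with x hx
    simp only [Pi.one_apply] at hx
    have hx1 : g x ≤ 1 := by
      simpa [hgdef] using ENNReal.toReal_mono ENNReal.one_ne_top hx
    exact min_eq_left hx1
  -- choice of δ
  set δ := min 1 ((ε/12)^2) with hδdef
  have hδpos : 0 < δ := lt_min one_pos (by positivity)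
  have hδ1 : δ ≤ 1 := min_le_left _ _
  have hsd : Real.sqrt δ ≤ ε / 12 := by
    calc Real.sqrt δ ≤ Real.sqrt ((ε/12)^2) := Real.sqrt_le_sqrt (min_le_right _ _)
    _ = ε / 12 := Real.sqrt_sq (by positivity)
  have hδsd : δ ≤ Real.sqrt δ := by
    have h := Real.sqrt_le_sqrt (show δ^2 ≤ δ by nlinarith)
    rwa [Real.sqrt_sq hδpos.le] at h
  -- bounds a, b
  set a := Real.sqrt (δ / (1 + δ)) with hadef
  have ha : 0 < a := Real.sqrt_pos.2 (by positivity)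
  set b := a⁻¹ with hbdef
  have ha1 : a ≤ 1 := by
    rw [hadef, Real.sqrt_le_one]
    rw [div_le_one (by positivity)]
    linarith
  have hb1 : (1:ℝ) ≤ b := by
    rw [hbdef]
    simpa using inv_anti₀ ha ha1
  have hab : a ≤ b := ha1.trans hb1
  have hb : 0 < b := lt_of_lt_of_le zero_lt_one hb1
  -- u₀
  set u₀ := fun x => Real.sqrt ((g' x + δ) / (f' x + δ)) with hu₀def
  have hu₀m : Measurable u₀ := (((hg'm.add_const δ).div (hf'm.add_const δ))).sqrt
  have hu₀a : ∀ x, a ≤ u₀ x := by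
    intro x
    apply Real.sqrt_le_sqrt
    exact div_le_div₀ (by linarith [hg'0 x]) (by linarith [hg'0 x]) (by linarith [hf'0 x])
      (by linarith [hf'1 x])
  have hu₀b : ∀ x, u₀ x ≤ b := by
    intro x
    have h1 : u₀ x ≤ Real.sqrt ((1 + δ) / δ) := by
      apply Real.sqrt_le_sqrt
      exact div_le_div₀ (by linarith) (by linarith [hg'1 x]) (by positivity)
        (by linarith [hf'0 x])
    have h2 : Real.sqrt ((1 + δ) / δ) = b := by
      rw [hbdef, hadef, ← Real.sqrt_inv, inv_div]
    linarith [h1, h2.le]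
  have hu₀pos : ∀ x, 0 < u₀ x := fun x => lt_of_lt_of_le ha (hu₀a x)
  have hu₀int : Integrable u₀ m := integrable_of_bdd' hu₀m.aestronglyMeasurable
    (C := b) (fun x => by rw [abs_of_pos (hu₀pos x)]; exact hu₀b x)
  -- approximation by a bounded continuous function
  set K := 1 + (a⁻¹)^2 with hKdef
  have hK : 0 < K := by positivity
  set η := ε / (4 * K) with hηdef
  have hη : 0 < η := by positivity
  obtain ⟨w, hw, hwint⟩ := hu₀int.exists_boundedContinuous_integral_sub_le hη
  set u : C(α, ℝ) := ⟨fun x => max a (min b (w x)),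
    continuous_const.max (continuous_const.min w.continuous)⟩ with hudef
  have hua : ∀ x, a ≤ u x := fun x => le_max_left _ _
  have hub : ∀ x, u x ≤ b := fun x => max_le hab (min_le_left _ _)
  have hupos : ∀ x, 0 < u x := fun x => lt_of_lt_of_le ha (hua x)
  have hclamp : ∀ x, |u x - u₀ x| ≤ |w x - u₀ x| := by
    intro x
    have h0 : u₀ x = max a (min b (u₀ x)) := by
      rw [min_eq_right (hu₀b x), max_eq_right (hu₀a x)]
    have h1 : |max a (min b (w x)) - max a (min b (u₀ x))| ≤ |min b (w x) - min b (u₀ x)| := by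
      rw [max_comm a (min b (w x)), max_comm a (min b (u₀ x))]
      exact abs_max_sub_max_le_abs _ _ _
    calc |u x - u₀ x| = |max a (min b (w x)) - max a (min b (u₀ x))| := by rw [← h0]; rfl
    _ ≤ |min b (w x) - min b (u₀ x)| := h1
    _ ≤ max |b - b| |w x - u₀ x| := abs_min_sub_min_le_max _ _ _ _
    _ = |w x - u₀ x| := by simp
  set Werr := fun x => |w x - u₀ x| with hWdef
  have hWm : Measurable Werr := (w.continuous.measurable.sub hu₀m).abs
  have hWint : Integrable Werr m := ((hwint.sub hu₀int)).abs
  have hWnn : ∀ x, 0 ≤ Werr x := fun x => abs_nonneg _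
  have hWsum : ∫ x, Werr x ∂m ≤ η := by
    calc ∫ x, Werr x ∂m = ∫ x, ‖u₀ x - w x‖ ∂m := by
          apply integral_congr_ae
          filter_upwards with x
          rw [hWdef, Real.norm_eq_abs, abs_sub_comm]
    _ ≤ η := hw
  -- pointwise product bounds
  have hprod1 : ∀ x, f' x * u₀ x ≤ Real.sqrt ((f' x + δ) * (g' x + δ)) := by
    intro x
    have hd : 0 < f' x + δ := by linarith [hf'0 x]
    have e : u₀ x * (f' x + δ) = Real.sqrt ((f' x + δ) * (g' x + δ)) :=
      sqrt_div_mul _ _ (by linarith [hg'0 x]) hd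
    calc f' x * u₀ x ≤ (f' x + δ) * u₀ x :=
          mul_le_mul_of_nonneg_right (by linarith) (hu₀pos x).le
    _ = u₀ x * (f' x + δ) := by ring
    _ = _ := e
  have hprod2 : ∀ x, g' x * (u₀ x)⁻¹ ≤ Real.sqrt ((f' x + δ) * (g' x + δ)) := by
    intro x
    have hd : 0 < g' x + δ := by linarith [hg'0 x]
    have hinv : (u₀ x)⁻¹ = Real.sqrt ((f' x + δ) / (g' x + δ)) := by
      rw [hu₀def, ← Real.sqrt_inv, inv_div]
    have e : Real.sqrt ((f' x + δ) / (g' x + δ)) * (g' x + δ)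
        = Real.sqrt ((g' x + δ) * (f' x + δ)) :=
      sqrt_div_mul _ _ (by linarith [hf'0 x]) hd
    calc g' x * (u₀ x)⁻¹ ≤ (g' x + δ) * (u₀ x)⁻¹ :=
          mul_le_mul_of_nonneg_right (by linarith) (by positivity)
    _ = Real.sqrt ((f' x + δ) / (g' x + δ)) * (g' x + δ) := by rw [hinv]; ring
    _ = Real.sqrt ((g' x + δ) * (f' x + δ)) := e
    _ = _ := by rw [mul_comm]
  have hsq : ∀ x, Real.sqrt ((f' x + δ) * (g' x + δ))
      ≤ Real.sqrt (f' x * g' x) + (2 * Real.sqrt δ + δ) := by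
    intro x
    have e : (f' x + δ) * (g' x + δ) = f' x * g' x + (δ * g' x + (δ * f' x + δ * δ)) := by ring
    have h1 : Real.sqrt (δ * g' x) ≤ Real.sqrt δ := by
      apply Real.sqrt_le_sqrt
      nlinarith [hg'1 x, hg'0 x]
    have h2 : Real.sqrt (δ * f' x) ≤ Real.sqrt δ := by
      apply Real.sqrt_le_sqrt
      nlinarith [hf'1 x, hf'0 x]
    have h3 : Real.sqrt (δ * δ) = δ := Real.sqrt_mul_self hδpos.le
    calc Real.sqrt ((f' x + δ) * (g' x + δ))
        = Real.sqrt (f' x * g' x + (δ * g' x + (δ * f' x + δ * δ))) := by rw [e]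
    _ ≤ Real.sqrt (f' x * g' x) + Real.sqrt (δ * g' x + (δ * f' x + δ * δ)) := by
        apply sqrt_add_le' _ _ (by positivity)
        positivity
    _ ≤ Real.sqrt (f' x * g' x) + (Real.sqrt (δ * g' x) + Real.sqrt (δ * f' x + δ * δ)) := by
        have := sqrt_add_le' (δ * g' x) (δ * f' x + δ * δ) (by positivity) (by positivity)
        linarith
    _ ≤ Real.sqrt (f' x * g' x) + (Real.sqrt (δ * g' x)
          + (Real.sqrt (δ * f' x) + Real.sqrt (δ * δ))) := by
        have := sqrt_add_le' (δ * f' x) (δ * δ) (by positivity) (by positivity)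
        linarith
    _ ≤ _ := by rw [h3]; linarith
  -- integrability of all pieces
  have hum : Measurable (u : α → ℝ) := u.continuous.measurable
  have I1 : Integrable (fun x => f' x * u x) m := by
    apply integrable_of_bdd' ((hf'm.mul hum).aestronglyMeasurable) (C := b)
    intro x
    simp only [Pi.mul_apply, Pi.inv_apply]
    rw [abs_of_nonneg (mul_nonneg (hf'0 x) (hupos x).le)]
    calc f' x * u x ≤ 1 * u x := mul_le_mul_of_nonneg_right (hf'1 x) (hupos x).le
    _ = u x := one_mul _
    _ ≤ b := hub x
  have I2 : Integrable (fun x => f' x * u₀ x) m := by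
    apply integrable_of_bdd' ((hf'm.mul hu₀m).aestronglyMeasurable) (C := b)
    intro x
    simp only [Pi.mul_apply, Pi.inv_apply]
    rw [abs_of_nonneg (mul_nonneg (hf'0 x) (hu₀pos x).le)]
    calc f' x * u₀ x ≤ 1 * u₀ x := mul_le_mul_of_nonneg_right (hf'1 x) (hu₀pos x).le
    _ = u₀ x := one_mul _
    _ ≤ b := hu₀b x
  have I4 : Integrable (fun x => g' x * (u x)⁻¹) m := by
    apply integrable_of_bdd' ((hg'm.mul hum.inv).aestronglyMeasurable) (C := a⁻¹)
    intro x
    simp only [Pi.mul_apply, Pi.inv_apply]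
    rw [abs_of_nonneg (mul_nonneg (hg'0 x) (inv_nonneg.2 (hupos x).le))]
    calc g' x * (u x)⁻¹ ≤ 1 * (u x)⁻¹ :=
          mul_le_mul_of_nonneg_right (hg'1 x) (inv_nonneg.2 (hupos x).le)
    _ = (u x)⁻¹ := one_mul _
    _ ≤ a⁻¹ := inv_anti₀ ha (hua x)
  have I5 : Integrable (fun x => g' x * (u₀ x)⁻¹) m := by
    apply integrable_of_bdd' ((hg'm.mul hu₀m.inv).aestronglyMeasurable) (C := a⁻¹)
    intro x
    simp only [Pi.mul_apply, Pi.inv_apply]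
    rw [abs_of_nonneg (mul_nonneg (hg'0 x) (by positivity))]
    calc g' x * (u₀ x)⁻¹ ≤ 1 * (u₀ x)⁻¹ := mul_le_mul_of_nonneg_right (hg'1 x) (by positivity)
    _ = (u₀ x)⁻¹ := one_mul _
    _ ≤ a⁻¹ := inv_anti₀ ha (hu₀a x)
  have I6 : Integrable (fun x => Real.sqrt ((f' x + δ) * (g' x + δ))) m := by
    apply integrable_of_bdd'
      (((hf'm.add_const δ).mul (hg'm.add_const δ)).sqrt.aestronglyMeasurable) (C := 1 + δ)
    intro x
    rw [abs_of_nonneg (Real.sqrt_nonneg _)]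
    calc Real.sqrt ((f' x + δ) * (g' x + δ)) ≤ Real.sqrt ((1 + δ) * (1 + δ)) := by
          apply Real.sqrt_le_sqrt
          have h1 := hf'1 x; have h2 := hg'1 x; have h3 := hf'0 x; have h4 := hg'0 x
          nlinarith
    _ = 1 + δ := Real.sqrt_mul_self (by positivity)
  have I7 : Integrable (fun x => Real.sqrt (f' x * g' x)) m := by
    apply integrable_of_bdd' ((hf'm.mul hg'm).sqrt.aestronglyMeasurable) (C := 1)
    intro x
    rw [abs_of_nonneg (Real.sqrt_nonneg _)]
    calc Real.sqrt (f' x * g' x) ≤ Real.sqrt (1 * 1) := by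
          apply Real.sqrt_le_sqrt
          have h1 := hf'1 x; have h2 := hg'1 x; have h3 := hf'0 x; have h4 := hg'0 x
          nlinarith
    _ = 1 := by norm_num
  set S := ∫ x, Real.sqrt ((f' x + δ) * (g' x + δ)) ∂m with hSdef
  -- estimate ∫ u dP
  have c1 : ∫ x, u x ∂P ≤ S + η := by
    have e0 : ∫ x, u x ∂P = ∫ x, f x * u x ∂m := by
      rw [← integral_rnDeriv_smul hPm]
      simp [smul_eq_mul, hfdef]
    have e1 : ∫ x, f x * u x ∂m = ∫ x, f' x * u x ∂m := by
      apply integral_congr_ae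
      filter_upwards [hff'] with x hx
      rw [hx]
    have e2 : ∫ x, f' x * u x ∂m ≤ ∫ x, (f' x * u₀ x + Werr x) ∂m := by
      apply integral_mono I1 (I2.add hWint)
      intro x
      simp only [Pi.add_apply]
      have h2 : u x - u₀ x ≤ |w x - u₀ x| := (le_abs_self _).trans (hclamp x)
      have h3 := hf'0 x
      have h4 := hf'1 x
      have h5 := hWnn x
      simp only [hWdef]
      nlinarith
    have e3 : ∫ x, (f' x * u₀ x + Werr x) ∂m = (∫ x, f' x * u₀ x ∂m) + ∫ x, Werr x ∂m :=
      integral_add I2 hWint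
    have e4 : ∫ x, f' x * u₀ x ∂m ≤ S := integral_mono I2 I6 hprod1
    linarith [e0, e1, e2, e3, e4, hWsum]
  -- estimate ∫ u⁻¹ dQ
  have c2 : ∫ x, (u x)⁻¹ ∂Q ≤ S + (a⁻¹)^2 * η := by
    have e0 : ∫ x, (u x)⁻¹ ∂Q = ∫ x, g x * (u x)⁻¹ ∂m := by
      rw [← integral_rnDeriv_smul hQm]
      simp [smul_eq_mul, hgdef]
    have e1 : ∫ x, g x * (u x)⁻¹ ∂m = ∫ x, g' x * (u x)⁻¹ ∂m := by
      apply integral_congr_ae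
      filter_upwards [hgg'] with x hx
      rw [hx]
    have e2 : ∫ x, g' x * (u x)⁻¹ ∂m ≤ ∫ x, (g' x * (u₀ x)⁻¹ + (a⁻¹)^2 * Werr x) ∂m := by
      apply integral_mono I4 (I5.add (hWint.const_mul _))
      intro x
      simp only [Pi.add_apply]
      have hux := hupos x
      have hu₀x := hu₀pos x
      have hkey : (u x)⁻¹ - (u₀ x)⁻¹ ≤ (a⁻¹)^2 * Werr x := by
        have heq : (u x)⁻¹ - (u₀ x)⁻¹ = (u₀ x - u x) / (u x * u₀ x) := by
          field_simp
        rw [heq]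
        have h1 : u₀ x - u x ≤ Werr x := by
          have := (neg_abs_le (u x - u₀ x))
          have := hclamp x
          simp only [hWdef]
          nlinarith [le_abs_self (u₀ x - u x), abs_sub_comm (u₀ x) (u x), hclamp x]
        have h2 : (u₀ x - u x) / (u x * u₀ x) ≤ Werr x / (a * a) :=
          div_le_div₀ (hWnn x) h1 (by positivity)
            (mul_le_mul (hua x) (hu₀a x) ha.le hux.le)
        calc (u₀ x - u x) / (u x * u₀ x) ≤ Werr x / (a * a) := h2
        _ = (a⁻¹)^2 * Werr x := by rw [sq, div_eq_mul_inv, mul_inv]; ring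
      have h3 := hg'0 x
      have h4 := hg'1 x
      have h5 : 0 ≤ (a⁻¹)^2 * Werr x := mul_nonneg (by positivity) (hWnn x)
      nlinarith [mul_le_mul_of_nonneg_left hkey h3]
    have e3 : ∫ x, (g' x * (u₀ x)⁻¹ + (a⁻¹)^2 * Werr x) ∂m
        = (∫ x, g' x * (u₀ x)⁻¹ ∂m) + (a⁻¹)^2 * ∫ x, Werr x ∂m := by
      rw [integral_add I5 (hWint.const_mul _), integral_const_mul]
    have e4 : ∫ x, g' x * (u₀ x)⁻¹ ∂m ≤ S := integral_mono I5 I6 hprod2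
    have e5 : (a⁻¹)^2 * ∫ x, Werr x ∂m ≤ (a⁻¹)^2 * η :=
      mul_le_mul_of_nonneg_left hWsum (by positivity)
    linarith [e0, e1, e2, e3, e4, e5]
  -- estimate S
  have c3 : S ≤ affinity P Q + ε / 2 := by
    have e1 : S ≤ ∫ x, (Real.sqrt (f' x * g' x) + (2 * Real.sqrt δ + δ)) ∂m := by
      apply integral_mono I6 (I7.add (integrable_const _)) hsq
    have e2 : ∫ x, (Real.sqrt (f' x * g' x) + (2 * Real.sqrt δ + δ)) ∂m
        = (∫ x, Real.sqrt (f' x * g' x) ∂m) + (2 * Real.sqrt δ + δ) * 2 := by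
      rw [integral_add I7 (integrable_const _), integral_const, smul_eq_mul, measureReal_def, hmuniv]
      ring
    have e3 : ∫ x, Real.sqrt (f' x * g' x) ∂m = affinity P Q := by
      apply integral_congr_ae
      filter_upwards [hff', hgg'] with x hx1 hx2
      rw [hx1, hx2]
    have e4 : (2 * Real.sqrt δ + δ) * 2 ≤ ε / 2 := by
      have := hsd
      have := hδsd
      have hsdnn : 0 ≤ Real.sqrt δ := Real.sqrt_nonneg _
      nlinarith
    linarith [e1, e2.le, e3.le, e4]
  refine ⟨u, a, b, ha, hua, hub, ?_⟩
  have hKη : K * η = ε / 4 := by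
    rw [hηdef]
    field_simp
  have ha2 : 0 < (a⁻¹)^2 := by positivity
  have hsum : (∫ x, u x ∂P + ∫ x, (u x)⁻¹ ∂Q) / 2 ≤ S + K * η / 2 := by
    rw [hKdef]
    have hη' := hη.le
    nlinarith [c1, c2]
  calc (∫ x, u x ∂P + ∫ x, (u x)⁻¹ ∂Q) / 2 ≤ S + K * η / 2 := hsum
  _ = S + ε / 8 := by rw [hKη]; ring
  _ ≤ affinity P Q + ε / 2 + ε / 8 := by linarith [c3]
  _ ≤ affinity P Q + ε := by linarith [hε]

/-- Coquet–Kamae–Mendès-France: affinity is upper semicontinuous along weakly convergent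
sequences of probability measures on the circle. -/
theorem affinity_limsup_le_of_weak_convergence
    (P Q : ℕ → Measure (AddCircle (2 * Real.pi)))
    (hP : ∀ n, IsProbabilityMeasure (P n)) (hQ : ∀ n, IsProbabilityMeasure (Q n))
    (Plim Qlim : Measure (AddCircle (2 * Real.pi)))
    (hPlim : IsProbabilityMeasure Plim) (hQlim : IsProbabilityMeasure Qlim)
    (hPconv : ∀ w : C(AddCircle (2 * Real.pi), ℝ),
      Filter.Tendsto (fun n => ∫ θ, w θ ∂(P n)) Filter.atTop (nhds (∫ θ, w θ ∂Plim)))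
    (hQconv : ∀ w : C(AddCircle (2 * Real.pi), ℝ),
      Filter.Tendsto (fun n => ∫ θ, w θ ∂(Q n)) Filter.atTop (nhds (∫ θ, w θ ∂Qlim))) :
    Filter.limsup (fun n => affinity (P n) (Q n)) Filter.atTop ≤ affinity Plim Qlim := by
  apply le_of_forall_pos_le_add
  intro ε hε
  obtain ⟨u, a, b, ha, hua, hub, hkey⟩ := exists_good_pair Plim Qlim hε
  have hmeas : Measurable (u : AddCircle (2 * Real.pi) → ℝ) := u.continuous.measurable
  have hbound : ∀ n, affinity (P n) (Q n)
      ≤ (∫ x, u x ∂(P n) + ∫ x, (u x)⁻¹ ∂(Q n)) / 2 := by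
    intro n
    haveI := hP n
    haveI := hQ n
    exact affinity_le_of_bound _ _ u hmeas a b ha hua hub
  set v : C(AddCircle (2 * Real.pi), ℝ) :=
    ⟨fun x => (u x)⁻¹, u.continuous.inv₀ (fun x => ne_of_gt (lt_of_lt_of_le ha (hua x)))⟩
    with hvdef
  have htend : Filter.Tendsto (fun n => (∫ x, u x ∂(P n) + ∫ x, (u x)⁻¹ ∂(Q n)) / 2)
      Filter.atTop (nhds ((∫ x, u x ∂Plim + ∫ x, (u x)⁻¹ ∂Qlim) / 2)) := by
    have h1 := hPconv u
    have h2 := hQconv v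
    exact (h1.add h2).div_const 2
  have hlim : Filter.limsup (fun n => affinity (P n) (Q n)) Filter.atTop
      ≤ (∫ x, u x ∂Plim + ∫ x, (u x)⁻¹ ∂Qlim) / 2 := by
    have hco : Filter.IsCoboundedUnder (· ≤ ·) Filter.atTop (fun n => affinity (P n) (Q n)) := by
      exact Filter.isCoboundedUnder_le_of_le Filter.atTop (fun n => affinity_nonneg (P n) (Q n))
    have hbd : Filter.IsBoundedUnder (· ≤ ·) Filter.atTop
        (fun n => (∫ x, u x ∂(P n) + ∫ x, (u x)⁻¹ ∂(Q n)) / 2) :=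
      htend.isBoundedUnder_le
    have h1 := Filter.limsup_le_limsup (Filter.Eventually.of_forall hbound) hco hbd
    rwa [htend.limsup_eq] at h1
  exact hlim.trans hkey
end

section
/- For n ≥ 1 let P_n(θ) = (1/√n) ∑_{j=1}^{n} μ(j) e^{ijθ} and ‖P_n‖₂² = ∫₀^{2π} |P_n(θ)|² dθ/(2π) = (1/n) ∑_{j=1}^{n} μ(j)². Assume the sequence (P_n) is L¹-flat in the normalized sense that ∫₀^{2π} | |P_n(θ)|² / ‖P_n‖₂² − 1 | dθ/(2π) → 0 as n → ∞. Then for every integer k ≠ 0, lim_{n→∞} (1/n) ∑_{j=1}^{n} μ(j) μ(j+k) = 0. -/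
open scoped BigOperators
open MeasureTheory AddCircle ArithmeticFunction

instance : Fact (0 < 2 * Real.pi) := ⟨by positivity⟩

namespace MoebiusFlatAux

noncomputable section

local notation "𝕋" => AddCircle (2 * Real.pi)

lemma int_fourier (m : ℤ) :
    (∫ x : 𝕋, (fourier m x : ℂ) ∂haarAddCircle) = if m = 0 then 1 else 0 := by
  split_ifs with h
  · subst h; simp [fourier_zero]
  · exact integral_eq_zero_of_add_right_eq_neg
      (fourier_add_half_inv_index h (by positivity))

lemma sum_pick (n : ℕ) (c : ℤ) (f : ℕ → ℂ) :
    (∑ l ∈ Finset.Icc 1 n, f l * (if (l : ℤ) = c then 1 else 0))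
      = if c ∈ Finset.Icc (1 : ℤ) (n : ℤ) then f c.toNat else 0 := by
  split_ifs with h
  · obtain ⟨h1, h2⟩ := Finset.mem_Icc.mp h
    rw [Finset.sum_eq_single c.toNat]
    · have : ((c.toNat : ℕ) : ℤ) = c := Int.toNat_of_nonneg (by omega)
      simp [this]
    · intro l hl hne
      have : (l : ℤ) ≠ c := by omega
      simp [this]
    · intro hmem
      exact absurd (Finset.mem_Icc.mpr ⟨by omega, by omega⟩) hmem
  · apply Finset.sum_eq_zero
    intro l hl
    obtain ⟨h1, h2⟩ := Finset.mem_Icc.mp hl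
    have : (l : ℤ) ≠ c := by
      intro he
      exact h (Finset.mem_Icc.mpr ⟨by omega, by omega⟩)
    simp [this]

/-- pointwise expansion of `|P_n|^2 * fourier k` as a double sum of characters -/
lemma point (n : ℕ) (k : ℤ) (θ : 𝕋) :
    ((((‖(Real.sqrt n : ℂ)⁻¹ *
          ∑ j ∈ Finset.Icc 1 n, (moebius j : ℂ) * fourier (j : ℤ) θ‖) ^ 2 : ℝ)) : ℂ)
        * fourier k θ
      = (n : ℂ)⁻¹ * ∑ j ∈ Finset.Icc 1 n, ∑ l ∈ Finset.Icc 1 n,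
          ((moebius j : ℂ) * (moebius l : ℂ)) * fourier ((j : ℤ) - l + k) θ := by
  set S : ℂ := ∑ j ∈ Finset.Icc 1 n, (moebius j : ℂ) * fourier (j : ℤ) θ with hS
  set s : ℂ := ((Real.sqrt n : ℝ) : ℂ)⁻¹ with hs
  have habs : (((‖s * S‖) ^ 2 : ℝ) : ℂ) = (s * S) * (starRingEnd ℂ) (s * S) := by
    rw [Complex.sq_norm, ← Complex.mul_conj]
  have hss : s * (starRingEnd ℂ) s = (n : ℂ)⁻¹ := by
    rw [hs, map_inv₀, Complex.conj_ofReal, ← mul_inv, ← Complex.ofReal_mul,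
      Real.mul_self_sqrt (Nat.cast_nonneg n)]
    norm_num
  have hconjS : (starRingEnd ℂ) S = ∑ l ∈ Finset.Icc 1 n, (moebius l : ℂ) * fourier (-(l : ℤ)) θ := by
    rw [hS, map_sum]
    refine Finset.sum_congr rfl fun l _ => ?_
    rw [map_mul, map_intCast, ← fourier_neg]
  rw [habs]
  have : (s * S) * (starRingEnd ℂ) (s * S) * fourier k θ
      = (s * (starRingEnd ℂ) s) * (S * (starRingEnd ℂ) S * fourier k θ) := by
    rw [map_mul]; ring
  rw [this, hss, hconjS, hS, Finset.sum_mul_sum, Finset.sum_mul]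
  congr 1
  refine Finset.sum_congr rfl fun j _ => ?_
  rw [Finset.sum_mul]
  refine Finset.sum_congr rfl fun l _ => ?_
  have : fourier ((j : ℤ) - l + k) θ = fourier (j : ℤ) θ * fourier (-(l : ℤ)) θ * fourier k θ := by
    rw [← fourier_add, ← fourier_add, sub_eq_add_neg]
  rw [this]; ring

lemma integrable_cont {f : 𝕋 → ℂ} (hf : Continuous f) :
    Integrable f haarAddCircle :=
  hf.integrable_of_hasCompactSupport (HasCompactSupport.of_compactSpace _)

/-- the k-th Fourier coefficient of |P_n|^2 -/
lemma I_eq (n : ℕ) (k : ℤ) :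
    (∫ θ : 𝕋, ((((‖(Real.sqrt n : ℂ)⁻¹ *
            ∑ j ∈ Finset.Icc 1 n, (moebius j : ℂ) * fourier (j : ℤ) θ‖) ^ 2 : ℝ)) : ℂ)
          * fourier k θ ∂haarAddCircle)
      = (n : ℂ)⁻¹ * ∑ j ∈ Finset.Icc 1 n, (moebius j : ℂ) *
          (if ((j : ℤ) + k) ∈ Finset.Icc (1 : ℤ) (n : ℤ)
            then (moebius ((j : ℤ) + k).toNat : ℂ) else 0) := by
  have hint : ∀ m : ℤ, Integrable (fun θ : 𝕋 => (fourier m θ : ℂ)) haarAddCircle :=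
    fun m => integrable_cont (fourier m).continuous
  calc
    (∫ θ : 𝕋, ((((‖(Real.sqrt n : ℂ)⁻¹ *
            ∑ j ∈ Finset.Icc 1 n, (moebius j : ℂ) * fourier (j : ℤ) θ‖) ^ 2 : ℝ)) : ℂ)
          * fourier k θ ∂haarAddCircle)
        = ∫ θ : 𝕋, (n : ℂ)⁻¹ * ∑ j ∈ Finset.Icc 1 n, ∑ l ∈ Finset.Icc 1 n,
            ((moebius j : ℂ) * (moebius l : ℂ)) * fourier ((j : ℤ) - l + k) θ ∂haarAddCircle := by
          refine integral_congr_ae (Filter.Eventually.of_forall fun θ => ?_)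
          exact point n k θ
    _ = (n : ℂ)⁻¹ * ∑ j ∈ Finset.Icc 1 n, ∑ l ∈ Finset.Icc 1 n,
            ((moebius j : ℂ) * (moebius l : ℂ)) *
              ∫ θ : 𝕋, fourier ((j : ℤ) - l + k) θ ∂haarAddCircle := by
          rw [integral_const_mul]
          congr 1
          rw [integral_finset_sum]
          · refine Finset.sum_congr rfl fun j _ => ?_
            rw [integral_finset_sum]
            · exact Finset.sum_congr rfl fun l _ => integral_const_mul _ _
            · intro l _
              exact ((hint _).const_mul _)
          · intro j _
            exact MeasureTheory.integrable_finset_sum _ fun l _ => ((hint _).const_mul _)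
    _ = (n : ℂ)⁻¹ * ∑ j ∈ Finset.Icc 1 n, (moebius j : ℂ) *
          (if ((j : ℤ) + k) ∈ Finset.Icc (1 : ℤ) (n : ℤ)
            then (moebius ((j : ℤ) + k).toNat : ℂ) else 0) := by
          congr 1
          refine Finset.sum_congr rfl fun j _ => ?_
          have : ∀ l ∈ Finset.Icc 1 n,
              ((moebius j : ℂ) * (moebius l : ℂ)) *
                  ∫ θ : 𝕋, fourier ((j : ℤ) - l + k) θ ∂haarAddCircle
                = ((moebius j : ℂ) * (moebius l : ℂ)) * (if (l : ℤ) = (j : ℤ) + k then 1 else 0) := by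
            intro l _
            rw [int_fourier]
            congr 1
            exact if_congr (by omega) rfl rfl
          rw [Finset.sum_congr rfl this]
          have := sum_pick n ((j : ℤ) + k) (fun l => (moebius j : ℂ) * (moebius l : ℂ))
          simp only [mul_assoc] at this ⊢
          rw [this]
          split_ifs <;> simp

end

end MoebiusFlatAux

namespace MoebiusFlatAux
noncomputable section
local notation "𝕋" => AddCircle (2 * Real.pi)

lemma norm_fourier_val (m : ℤ) (θ : 𝕋) : ‖(fourier m θ : ℂ)‖ = 1 := by
  rw [fourier_apply]
  exact Circle.norm_coe _

lemma norm_moebius_le (m : ℕ) : ‖(moebius m : ℂ)‖ ≤ 1 := by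
  have h := @ArithmeticFunction.abs_moebius_le_one m
  have h2 : ((moebius m : ℤ) : ℂ) = (((moebius m : ℤ) : ℝ) : ℂ) := by push_cast; ring
  rw [h2, Complex.norm_real, Real.norm_eq_abs, ← Int.cast_abs]
  exact_mod_cast h

lemma cont_A (n : ℕ) :
    Continuous (fun θ : 𝕋 => (‖(Real.sqrt n : ℂ)⁻¹ *
        ∑ j ∈ Finset.Icc 1 n, (moebius j : ℂ) * fourier (j : ℤ) θ‖) ^ 2) := by
  apply Continuous.pow
  apply continuous_norm.comp
  exact continuous_const.mul (continuous_finset_sum _ fun j _ =>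
    continuous_const.mul (fourier (j : ℤ)).continuous)
end
end MoebiusFlatAux

namespace MoebiusFlatAux
noncomputable section
local notation "𝕋" => AddCircle (2 * Real.pi)

lemma abs_sub_eq (a Q : ℝ) (hQ : 0 < Q) : |a - Q| = Q * |a / Q - 1| := by
  have : a - Q = Q * (a / Q - 1) := by field_simp
  rw [this, abs_mul, abs_of_pos hQ]

lemma norm_I_le' (A : 𝕋 → ℝ) (hcA : Continuous A) (k : ℤ) (hk : k ≠ 0) (Q : ℝ) :
    ‖∫ θ : 𝕋, ((A θ : ℝ) : ℂ) * fourier k θ ∂haarAddCircle‖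
      ≤ ∫ θ : 𝕋, |A θ - Q| ∂haarAddCircle := by
  have h1 : Integrable (fun θ : 𝕋 => ((A θ - Q : ℝ) : ℂ) * fourier k θ) haarAddCircle :=
    integrable_cont ((Complex.continuous_ofReal.comp (hcA.sub continuous_const)).mul
      (fourier k).continuous)
  have h2 : Integrable (fun θ : 𝕋 => (Q : ℂ) * fourier k θ) haarAddCircle :=
    (integrable_cont (fourier k).continuous).const_mul _
  have key : (∫ θ : 𝕋, ((A θ : ℝ) : ℂ) * fourier k θ ∂haarAddCircle)
      = ∫ θ : 𝕋, ((A θ - Q : ℝ) : ℂ) * fourier k θ ∂haarAddCircle := by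
    have hpt : ∀ θ : 𝕋, ((A θ : ℝ) : ℂ) * fourier k θ
        = ((A θ - Q : ℝ) : ℂ) * fourier k θ + (Q : ℂ) * fourier k θ := by
      intro θ; push_cast; ring
    rw [integral_congr_ae (Filter.Eventually.of_forall hpt), integral_add h1 h2,
      integral_const_mul, int_fourier, if_neg hk, mul_zero, add_zero]
  rw [key]
  refine le_trans (norm_integral_le_integral_norm _) (le_of_eq ?_)
  refine integral_congr_ae (Filter.Eventually.of_forall fun θ => ?_)
  dsimp only
  rw [norm_mul, norm_fourier_val, mul_one, Complex.norm_real, Real.norm_eq_abs]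

lemma Q_pos {n : ℕ} (hn : 1 ≤ n) :
    0 < (n : ℝ)⁻¹ * ∑ j ∈ Finset.Icc 1 n, (moebius j : ℝ) ^ 2 := by
  apply mul_pos (inv_pos.mpr (by exact_mod_cast Nat.pos_of_ne_zero (by omega)))
  have h1 : ((moebius 1 : ℤ) : ℝ) ^ 2 = 1 := by
    rw [ArithmeticFunction.moebius_apply_one]; norm_num
  calc (0 : ℝ) < 1 := one_pos
    _ = ((moebius 1 : ℤ) : ℝ) ^ 2 := h1.symm
    _ ≤ ∑ j ∈ Finset.Icc 1 n, (moebius j : ℝ) ^ 2 :=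
        Finset.single_le_sum (f := fun j => ((moebius j : ℤ) : ℝ) ^ 2)
          (fun j _ => sq_nonneg _) (Finset.mem_Icc.mpr ⟨le_refl 1, hn⟩)

lemma Q_le_one (n : ℕ) :
    (n : ℝ)⁻¹ * ∑ j ∈ Finset.Icc 1 n, (moebius j : ℝ) ^ 2 ≤ 1 := by
  rcases Nat.eq_zero_or_pos n with h | h
  · simp [h]
  · have hsum : ∑ j ∈ Finset.Icc 1 n, (moebius j : ℝ) ^ 2 ≤ (n : ℝ) := by
      calc ∑ j ∈ Finset.Icc 1 n, (moebius j : ℝ) ^ 2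
          ≤ ∑ _j ∈ Finset.Icc 1 n, (1 : ℝ) := by
            refine Finset.sum_le_sum fun j _ => ?_
            rw [sq_le_one_iff_abs_le_one, ← Int.cast_abs]
            exact_mod_cast ArithmeticFunction.abs_moebius_le_one
        _ = (n : ℝ) := by rw [Finset.sum_const, Nat.card_Icc]; simp
    calc (n : ℝ)⁻¹ * ∑ j ∈ Finset.Icc 1 n, (moebius j : ℝ) ^ 2
        ≤ (n : ℝ)⁻¹ * (n : ℝ) := by
          exact mul_le_mul_of_nonneg_left hsum (by positivity)
      _ = 1 := inv_mul_cancel₀ (by exact_mod_cast h.ne')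

lemma D_eq (n : ℕ) (hn : 1 ≤ n) :
    (∫ θ : 𝕋, |(‖(Real.sqrt n : ℂ)⁻¹ *
          ∑ j ∈ Finset.Icc 1 n, (moebius j : ℂ) * fourier (j : ℤ) θ‖) ^ 2 -
          ((n : ℝ)⁻¹ * ∑ j ∈ Finset.Icc 1 n, (moebius j : ℝ) ^ 2)| ∂haarAddCircle)
      = ((n : ℝ)⁻¹ * ∑ j ∈ Finset.Icc 1 n, (moebius j : ℝ) ^ 2) *
        ∫ θ : 𝕋, |(‖(Real.sqrt n : ℂ)⁻¹ *
          ∑ j ∈ Finset.Icc 1 n, (moebius j : ℂ) * fourier (j : ℤ) θ‖) ^ 2 /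
          ((n : ℝ)⁻¹ * ∑ j ∈ Finset.Icc 1 n, (moebius j : ℝ) ^ 2) - 1| ∂haarAddCircle := by
  set Q : ℝ := (n : ℝ)⁻¹ * ∑ j ∈ Finset.Icc 1 n, (moebius j : ℝ) ^ 2 with hQdef
  have hQ : 0 < Q := Q_pos hn
  rw [← integral_const_mul]
  refine integral_congr_ae (Filter.Eventually.of_forall fun θ => ?_)
  dsimp only
  exact abs_sub_eq _ _ hQ

lemma diff_bound (n : ℕ) (k : ℤ) :
    ‖(n : ℂ)⁻¹ * ∑ j ∈ Finset.Icc 1 n,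
          (moebius j : ℂ) * (moebius ((j : ℤ) + k).toNat : ℂ)
        - (n : ℂ)⁻¹ * ∑ j ∈ Finset.Icc 1 n, (moebius j : ℂ) *
          (if ((j : ℤ) + k) ∈ Finset.Icc (1 : ℤ) (n : ℤ)
            then (moebius ((j : ℤ) + k).toNat : ℂ) else 0)‖
      ≤ (n : ℝ)⁻¹ * (k.toNat : ℝ) := by
  rw [← mul_sub, ← Finset.sum_sub_distrib, norm_mul, norm_inv, Complex.norm_natCast]
  refine mul_le_mul_of_nonneg_left ?_ (by positivity)
  calc ‖∑ j ∈ Finset.Icc 1 n, ((moebius j : ℂ) * (moebius ((j : ℤ) + k).toNat : ℂ)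
          - (moebius j : ℂ) * (if ((j : ℤ) + k) ∈ Finset.Icc (1 : ℤ) (n : ℤ)
            then (moebius ((j : ℤ) + k).toNat : ℂ) else 0))‖
      ≤ ∑ j ∈ Finset.Icc 1 n, ‖(moebius j : ℂ) * (moebius ((j : ℤ) + k).toNat : ℂ)
          - (moebius j : ℂ) * (if ((j : ℤ) + k) ∈ Finset.Icc (1 : ℤ) (n : ℤ)
            then (moebius ((j : ℤ) + k).toNat : ℂ) else 0)‖ := norm_sum_le _ _
    _ ≤ ∑ j ∈ Finset.Icc 1 n, (if (n : ℤ) < (j : ℤ) + k then (1 : ℝ) else 0) := by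
        refine Finset.sum_le_sum fun j hj => ?_
        by_cases hm : ((j : ℤ) + k) ∈ Finset.Icc (1 : ℤ) (n : ℤ)
        · rw [if_pos hm, sub_self, norm_zero]
          split_ifs <;> norm_num
        · rw [if_neg hm, mul_zero, sub_zero]
          rw [Finset.mem_Icc, not_and_or, not_le, not_le] at hm
          by_cases hc : (n : ℤ) < (j : ℤ) + k
          · rw [if_pos hc, norm_mul]
            exact mul_le_one₀ (norm_moebius_le _) (norm_nonneg _) (norm_moebius_le _)
          · rw [if_neg hc]
            have h0 : ((j : ℤ) + k).toNat = 0 := by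
              rcases hm with hm | hm
              · exact Int.toNat_of_nonpos (by omega)
              · omega
            rw [h0]
            simp
    _ = ((Finset.Icc 1 n).filter (fun j : ℕ => (n : ℤ) < (j : ℤ) + k)).card := by
        rw [Finset.sum_boole]
    _ ≤ (k.toNat : ℝ) := by
        have hsub : (Finset.Icc 1 n).filter (fun j : ℕ => (n : ℤ) < (j : ℤ) + k)
            ⊆ Finset.Ioc (n - k.toNat) n := by
          intro j hj
          rw [Finset.mem_filter, Finset.mem_Icc] at hj
          obtain ⟨⟨h1, h2⟩, h3⟩ := hj
          rw [Finset.mem_Ioc]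
          have hk' : k ≤ (k.toNat : ℤ) := Int.self_le_toNat k
          exact ⟨by omega, h2⟩
        have h1 := Finset.card_le_card hsub
        rw [Nat.card_Ioc] at h1
        have h2 : ((Finset.Icc 1 n).filter (fun j : ℕ => (n : ℤ) < (j : ℤ) + k)).card ≤ k.toNat :=
          le_trans h1 (by omega)
        exact_mod_cast h2
end
end MoebiusFlatAux

/-- If the normalized polynomials with Möbius coefficients
`P_n(θ) = (1/√n) ∑_{j=1}^n μ(j) e^{ijθ}` are `L¹`-flat, then the self-correlations of the
Möbius function vanish: `(1/n) ∑_{j=1}^n μ(j) μ(j+k) → 0` for every integer `k ≠ 0`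
(where `μ` is extended by `0` to non-positive integers). -/
theorem moebius_correlations_of_L1_flat
    (hflat : Filter.Tendsto
      (fun n : ℕ =>
        ∫ θ, |(‖(Real.sqrt n : ℂ)⁻¹ *
              ∑ j ∈ Finset.Icc 1 n, (moebius j : ℂ) * fourier (j : ℤ) θ‖) ^ 2 /
            ((n : ℝ)⁻¹ * ∑ j ∈ Finset.Icc 1 n, (moebius j : ℝ) ^ 2) - 1|
          ∂(haarAddCircle : Measure (AddCircle (2 * Real.pi))))
      Filter.atTop (nhds 0)) :
    ∀ k : ℤ, k ≠ 0 →
      Filter.Tendsto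
        (fun n : ℕ => (n : ℝ)⁻¹ *
          ∑ j ∈ Finset.Icc 1 n, (moebius j : ℝ) * (moebius ((j : ℤ) + k).toNat : ℝ))
        Filter.atTop (nhds 0) := by
  intro k hk
  set flat : ℕ → ℝ := fun n =>
    ∫ θ, |(‖(Real.sqrt n : ℂ)⁻¹ *
          ∑ j ∈ Finset.Icc 1 n, (moebius j : ℂ) * fourier (j : ℤ) θ‖) ^ 2 /
        ((n : ℝ)⁻¹ * ∑ j ∈ Finset.Icc 1 n, (moebius j : ℝ) ^ 2) - 1|
      ∂(haarAddCircle : Measure (AddCircle (2 * Real.pi))) with hflatdef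
  have hg : Filter.Tendsto (fun n : ℕ => flat n + (k.toNat : ℝ) * (n : ℝ)⁻¹)
      Filter.atTop (nhds 0) := by
    have h2 : Filter.Tendsto (fun n : ℕ => (k.toNat : ℝ) * (n : ℝ)⁻¹) Filter.atTop (nhds 0) := by
      simpa using tendsto_const_nhds.mul (tendsto_inv_atTop_nhds_zero_nat (𝕜 := ℝ))
    simpa using hflat.add h2
  refine squeeze_zero_norm' ?_ hg
  rw [Filter.eventually_atTop]
  refine ⟨1, fun n hn => ?_⟩
  set Q : ℝ := (n : ℝ)⁻¹ * ∑ j ∈ Finset.Icc 1 n, (moebius j : ℝ) ^ 2 with hQdef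
  set I : ℂ := ∫ θ : AddCircle (2 * Real.pi),
      ((((‖(Real.sqrt n : ℂ)⁻¹ *
          ∑ j ∈ Finset.Icc 1 n, (moebius j : ℂ) * fourier (j : ℤ) θ‖) ^ 2 : ℝ)) : ℂ)
        * fourier k θ ∂haarAddCircle with hIdef
  have hfc : (((n : ℝ)⁻¹ *
        ∑ j ∈ Finset.Icc 1 n, (moebius j : ℝ) * (moebius ((j : ℤ) + k).toNat : ℝ) : ℝ) : ℂ)
      = (n : ℂ)⁻¹ * ∑ j ∈ Finset.Icc 1 n,
          (moebius j : ℂ) * (moebius ((j : ℤ) + k).toNat : ℂ) := by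
    push_cast
    ring
  have hnorm : ‖(n : ℝ)⁻¹ *
        ∑ j ∈ Finset.Icc 1 n, (moebius j : ℝ) * (moebius ((j : ℤ) + k).toNat : ℝ)‖
      = ‖(((n : ℝ)⁻¹ *
        ∑ j ∈ Finset.Icc 1 n, (moebius j : ℝ) * (moebius ((j : ℤ) + k).toNat : ℝ) : ℝ) : ℂ)‖ := by
    rw [Complex.norm_real]
  rw [hnorm, hfc]
  have hIb : I = (n : ℂ)⁻¹ * ∑ j ∈ Finset.Icc 1 n, (moebius j : ℂ) *
      (if ((j : ℤ) + k) ∈ Finset.Icc (1 : ℤ) (n : ℤ)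
        then (moebius ((j : ℤ) + k).toNat : ℂ) else 0) := MoebiusFlatAux.I_eq n k
  have hIle : ‖I‖ ≤ flat n := by
    have h1 : ‖I‖ ≤ ∫ θ : AddCircle (2 * Real.pi),
        |(‖(Real.sqrt n : ℂ)⁻¹ *
          ∑ j ∈ Finset.Icc 1 n, (moebius j : ℂ) * fourier (j : ℤ) θ‖) ^ 2 - Q| ∂haarAddCircle :=
      MoebiusFlatAux.norm_I_le' _ (MoebiusFlatAux.cont_A n) k hk Q
    have h2 := MoebiusFlatAux.D_eq n hn
    rw [← hQdef] at h2
    have hQ1 : Q ≤ 1 := MoebiusFlatAux.Q_le_one n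
    have hfnn : 0 ≤ flat n :=
      integral_nonneg fun θ => abs_nonneg _
    calc ‖I‖ ≤ Q * flat n := by rw [← h2]; exact h1
      _ ≤ 1 * flat n := mul_le_mul_of_nonneg_right hQ1 hfnn
      _ = flat n := one_mul _
  calc ‖(n : ℂ)⁻¹ * ∑ j ∈ Finset.Icc 1 n,
          (moebius j : ℂ) * (moebius ((j : ℤ) + k).toNat : ℂ)‖
      ≤ ‖(n : ℂ)⁻¹ * ∑ j ∈ Finset.Icc 1 n,
          (moebius j : ℂ) * (moebius ((j : ℤ) + k).toNat : ℂ) - I‖ + ‖I‖ := by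
        simpa using norm_add_le ((n : ℂ)⁻¹ * ∑ j ∈ Finset.Icc 1 n,
          (moebius j : ℂ) * (moebius ((j : ℤ) + k).toNat : ℂ) - I) I
    _ ≤ (n : ℝ)⁻¹ * (k.toNat : ℝ) + flat n := by
        refine add_le_add ?_ hIle
        rw [hIb]
        exact MoebiusFlatAux.diff_bound n k
    _ = flat n + (k.toNat : ℝ) * (n : ℝ)⁻¹ := by ring
end

section
/- Let X be a compact metric space and let ξ, σ, λ be finite positive Borel measures on X such that for every nonnegative continuous function w : X → ℝ, ∫ w dξ ≤ (∫ w dσ)^{1/2} · (∫ w dλ)^{1/2}. Then for every Borel set A ⊆ X, ξ(A) ≤ √(σ(A)) · √(λ(A)). -/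
open MeasureTheory

/-- If `∫ w dξ ≤ √(∫ w dσ) √(∫ w dλ)` for every nonnegative continuous `w` on a compact
metric space, then `ξ(A) ≤ √(σ(A)) √(λ(A))` for every Borel set `A`. -/
theorem measure_cauchy_schwarz_of_continuous_test
    {X : Type*} [MetricSpace X] [CompactSpace X] [MeasurableSpace X] [BorelSpace X]
    (ξ σ lam : Measure X)
    [IsFiniteMeasure ξ] [IsFiniteMeasure σ] [IsFiniteMeasure lam]
    (h : ∀ w : C(X, ℝ), (∀ x, 0 ≤ w x) →
      ∫ x, w x ∂ξ ≤ Real.sqrt (∫ x, w x ∂σ) * Real.sqrt (∫ x, w x ∂lam)) :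
    ∀ A : Set X, MeasurableSet A →
      (ξ A).toReal ≤ Real.sqrt ((σ A).toReal) * Real.sqrt ((lam A).toReal) := by
  intro A hA
  set a := (σ A).toReal with ha
  set b := (lam A).toReal with hb
  have key : ∀ ε : ℝ, 0 < ε →
      (ξ A).toReal ≤ Real.sqrt (a + ε) * Real.sqrt (b + ε) + ε := by
    intro ε hε
    have hε' : (ENNReal.ofReal ε) ≠ 0 := by
      simp [ENNReal.ofReal_eq_zero, not_le, hε]
    obtain ⟨K, hKA, hK, hξK⟩ :=
      hA.exists_isCompact_lt_add (measure_ne_top ξ A) hε'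
    obtain ⟨U1, hAU1, hU1o, hσU1⟩ :=
      A.exists_isOpen_lt_add (μ := σ) (measure_ne_top σ A) hε'
    obtain ⟨U2, hAU2, hU2o, hlU2⟩ :=
      A.exists_isOpen_lt_add (μ := lam) (measure_ne_top lam A) hε'
    set U := U1 ∩ U2 with hU
    have hUo : IsOpen U := hU1o.inter hU2o
    have hKU : K ⊆ U := Set.subset_inter (hKA.trans hAU1) (hKA.trans hAU2)
    have hdisj : Disjoint K Uᶜ := Set.disjoint_compl_right_iff_subset.mpr hKU
    obtain ⟨f, hf0, hf1, hf01⟩ :=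
      exists_continuous_zero_one_of_isCompact' hK hUo.isClosed_compl hdisj
    have hfc : HasCompactSupport f :=
      IsCompact.of_isClosed_subset isCompact_univ (isClosed_tsupport _) (Set.subset_univ _)
    have hfint : ∀ (μ : Measure X) [IsFiniteMeasure μ], Integrable (fun x => f x) μ :=
      fun μ _ => f.continuous.integrable_of_hasCompactSupport hfc
    have hfnn : ∀ x, 0 ≤ f x := fun x => (hf01 x).1
    -- lower bound for ∫ f dξ
    have hK_le : (ξ K).toReal ≤ ∫ x, f x ∂ξ := by
      rw [← measureReal_def, ← MeasureTheory.integral_indicator_one hK.measurableSet]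
      apply integral_mono ((integrable_const (1:ℝ)).indicator hK.measurableSet) (hfint ξ)
      intro x
      by_cases hx : x ∈ K
      · simp [Set.indicator_of_mem hx, hf1 hx]
      · simp [Set.indicator_of_notMem hx, hfnn x]
    -- upper bounds for ∫ f dσ, ∫ f dλ
    have hUb : ∀ (μ : Measure X) [IsFiniteMeasure μ], ∫ x, f x ∂μ ≤ (μ U).toReal := by
      intro μ _
      rw [← measureReal_def, ← MeasureTheory.integral_indicator_one hUo.measurableSet]
      apply integral_mono (hfint μ) ((integrable_const (1:ℝ)).indicator hUo.measurableSet)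
      intro x
      by_cases hx : x ∈ U
      · simp [Set.indicator_of_mem hx, (hf01 x).2]
      · simpa [Set.indicator_of_notMem hx] using le_of_eq (hf0 hx)
    have hσU : (σ U).toReal ≤ a + ε := by
      have h1 : σ U ≤ σ A + ENNReal.ofReal ε :=
        le_trans (measure_mono Set.inter_subset_left) hσU1.le
      calc (σ U).toReal ≤ (σ A + ENNReal.ofReal ε).toReal :=
            ENNReal.toReal_mono (by finiteness) h1
        _ = a + ε := by
            rw [ENNReal.toReal_add (measure_ne_top σ A) ENNReal.ofReal_ne_top,
              ENNReal.toReal_ofReal hε.le]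
    have hlU : (lam U).toReal ≤ b + ε := by
      have h1 : lam U ≤ lam A + ENNReal.ofReal ε :=
        le_trans (measure_mono Set.inter_subset_right) hlU2.le
      calc (lam U).toReal ≤ (lam A + ENNReal.ofReal ε).toReal :=
            ENNReal.toReal_mono (by finiteness) h1
        _ = b + ε := by
            rw [ENNReal.toReal_add (measure_ne_top lam A) ENNReal.ofReal_ne_top,
              ENNReal.toReal_ofReal hε.le]
    have hint_nn : ∀ (μ : Measure X), 0 ≤ ∫ x, f x ∂μ :=
      fun μ => integral_nonneg hfnn
    have hchain : ∫ x, f x ∂ξ ≤ Real.sqrt (a + ε) * Real.sqrt (b + ε) := by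
      calc ∫ x, f x ∂ξ ≤ Real.sqrt (∫ x, f x ∂σ) * Real.sqrt (∫ x, f x ∂lam) := h f hfnn
        _ ≤ Real.sqrt (a + ε) * Real.sqrt (b + ε) := by
            apply mul_le_mul (Real.sqrt_le_sqrt ((hUb σ).trans hσU))
              (Real.sqrt_le_sqrt ((hUb lam).trans hlU)) (Real.sqrt_nonneg _)
              (Real.sqrt_nonneg _)
    have hξA : (ξ A).toReal ≤ (ξ K).toReal + ε := by
      calc (ξ A).toReal ≤ (ξ K + ENNReal.ofReal ε).toReal :=
            ENNReal.toReal_mono (by finiteness) hξK.le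
        _ = (ξ K).toReal + ε := by
            rw [ENNReal.toReal_add (measure_ne_top ξ K) ENNReal.ofReal_ne_top,
              ENNReal.toReal_ofReal hε.le]
    linarith [hK_le.trans hchain]
  -- take ε → 0⁺
  have hcont : Filter.Tendsto (fun ε : ℝ => Real.sqrt (a + ε) * Real.sqrt (b + ε) + ε)
      (nhdsWithin 0 (Set.Ioi 0)) (nhds (Real.sqrt a * Real.sqrt b)) := by
    have : Continuous (fun ε : ℝ => Real.sqrt (a + ε) * Real.sqrt (b + ε) + ε) := by
      fun_prop
    have := this.tendsto 0
    simp only [add_zero] at this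
    exact this.mono_left nhdsWithin_le_nhds
  exact ge_of_tendsto hcont (Filter.eventually_of_mem self_mem_nhdsWithin
    (fun ε hε => key ε hε))
end
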